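/- arXiv:1611.09579 — 7 statements merged into one kernel-verified Lean document; each statement's English description precedes it below -/
import Mathlib

section
/- If f : [0,1] → [0,1] is non-decreasing and satisfies ∫₀ʳ f(x) dx ≥ r²/2 for all r ∈ [0,1] with equality at r = 1, then for every measurable set B ⊆ [0,1], ∫_B f(x) dx ≥ μ(B)²/2. That is, for monotone functions, condition I on initial segments implies condition I for all measurable sets. -/
open MeasureTheory Set

theorem stmt_3
    (f : ℝ → ℝ) (hfmeas : Measurable f)
    (hf01 : ∀ x ∈ Icc (0:ℝ) 1, f x ∈ Icc (0:ℝ) 1)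
    (hmono : MonotoneOn f (Icc (0:ℝ) 1))
    (hinit : ∀ r ∈ Icc (0:ℝ) 1, r ^ 2 / 2 ≤ ∫ x in Icc (0:ℝ) r, f x)
    (heq : ∫ x in Icc (0:ℝ) 1, f x = 1 / 2) :
    ∀ B : Set ℝ, MeasurableSet B → B ⊆ Icc (0:ℝ) 1 →
      (volume B).toReal ^ 2 / 2 ≤ ∫ x in B, f x := by
  intro B hBmeas hBsub
  set b := (volume B).toReal with hb
  have hBle : volume B ≤ 1 := by
    have h := measure_mono (μ := volume) hBsub
    simpa [Real.volume_Icc] using h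
  have hBfin : volume B ≠ ⊤ := ne_top_of_le_ne_top (by simp) hBle
  have hb0 : 0 ≤ b := ENNReal.toReal_nonneg
  have hb1 : b ≤ 1 := by
    have := ENNReal.toReal_mono (by simp) hBle
    simpa using this
  have hbI : b ∈ Icc (0:ℝ) 1 := ⟨hb0, hb1⟩
  set I := Icc (0:ℝ) b with hI
  have hImeas : MeasurableSet I := measurableSet_Icc
  have hIsub : I ⊆ Icc (0:ℝ) 1 := Icc_subset_Icc le_rfl hb1
  have hvolI : volume I = ENNReal.ofReal b := by
    simp [hI, Real.volume_Icc]
  have hvolB : volume B = ENNReal.ofReal b := (ENNReal.ofReal_toReal hBfin).symm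
  -- integrability on measurable subsets of [0,1]
  have hint : ∀ s : Set ℝ, MeasurableSet s → s ⊆ Icc (0:ℝ) 1 → IntegrableOn f s := by
    intro s hsm hs
    apply Measure.integrableOn_of_bounded
      (ne_top_of_le_ne_top (by simp [Real.volume_Icc]) (measure_mono hs))
      hfmeas.aestronglyMeasurable (M := 1)
    filter_upwards [ae_restrict_mem hsm] with x hx
    have h := hf01 x (hs hx)
    rw [Real.norm_eq_abs, abs_le]
    exact ⟨by linarith [h.1], h.2⟩
  have hintB : IntegrableOn f B := hint B hBmeas hBsub
  have hintI : IntegrableOn f I := hint I hImeas hIsub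
  -- measures of the two differences are equal
  have hfinBI : volume (B ∩ I) ≠ ⊤ :=
    ne_top_of_le_ne_top hBfin (measure_mono inter_subset_left)
  have hmd : volume (B \ I) = volume (I \ B) := by
    have h1 : volume (B ∩ I) + volume (B \ I) = volume B :=
      measure_inter_add_diff B hImeas
    have h2 : volume (I ∩ B) + volume (I \ B) = volume I :=
      measure_inter_add_diff I hBmeas
    rw [inter_comm] at h2
    rw [hvolB] at h1
    rw [hvolI] at h2
    have := h1.trans h2.symm
    exact (ENNReal.add_right_inj hfinBI).mp this
  -- split both integrals
  have hsB : (∫ x in B ∩ I, f x) + ∫ x in B \ I, f x = ∫ x in B, f x :=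
    integral_inter_add_diff hImeas hintB
  have hsI : (∫ x in I ∩ B, f x) + ∫ x in I \ B, f x = ∫ x in I, f x :=
    integral_inter_add_diff hBmeas hintI
  -- pointwise bounds via monotonicity
  have hle1 : ∫ x in I \ B, f x ≤ f b * (volume (I \ B)).toReal := by
    have : ∫ x in I \ B, f x ≤ ∫ _x in I \ B, f b := by
      apply setIntegral_mono_on (hintI.mono_set diff_subset)
        ((integrableOn_const_iff (C := f b)).mpr (Or.inr
          ((ne_top_of_le_ne_top (hvolI ▸ ENNReal.ofReal_ne_top) (measure_mono diff_subset) :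
            volume (I \ B) ≠ ⊤).lt_top)))
        (hImeas.diff hBmeas)
      intro x hx
      exact hmono (hIsub hx.1) hbI hx.1.2
    simpa [mul_comm, measureReal_def] using this
  have hle2 : f b * (volume (B \ I)).toReal ≤ ∫ x in B \ I, f x := by
    have : ∫ _x in B \ I, f b ≤ ∫ x in B \ I, f x := by
      apply setIntegral_mono_on
        ((integrableOn_const_iff (C := f b)).mpr (Or.inr
          ((ne_top_of_le_ne_top hBfin (measure_mono diff_subset)).lt_top)))
        (hintB.mono_set diff_subset) (hBmeas.diff hImeas)
      intro x hx
      have hx01 := hBsub hx.1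
      have hxb : b ≤ x := by
        by_contra h
        exact hx.2 ⟨hx01.1, (lt_of_not_ge h).le⟩
      exact hmono hbI hx01 hxb
    simpa [mul_comm, measureReal_def] using this
  have hkey : ∫ x in I, f x ≤ ∫ x in B, f x := by
    rw [← hsB, ← hsI, inter_comm]
    have hmd' : (volume (I \ B)).toReal = (volume (B \ I)).toReal := by rw [hmd]
    rw [hmd'] at hle1
    linarith
  calc b ^ 2 / 2 ≤ ∫ x in I, f x := hinit b hbI
    _ ≤ ∫ x in B, f x := hkey
end

section
/- If f : [0,1] → [0,1] is a non-decreasing function satisfying condition I, then x/2 ≤ f(x) ≤ (x+1)/2 for almost every x ∈ [0,1]. -/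
open MeasureTheory Set

/-- Condition **I**: for every measurable `B ⊆ [0,1]`, `∫_B f ≥ μ(B)²/2`,
with equality whenever `μ(B) = 1`. -/
def CondI (f : ℝ → ℝ) : Prop :=
  ∀ B : Set ℝ, MeasurableSet B → B ⊆ Icc (0:ℝ) 1 →
    ((volume B).toReal ^ 2 / 2 ≤ ∫ x in B, f x) ∧
      (volume B = 1 → ∫ x in B, f x = (volume B).toReal ^ 2 / 2)

theorem stmt_4
    (f : ℝ → ℝ) (hfmeas : Measurable f)
    (hf01 : ∀ x ∈ Icc (0:ℝ) 1, f x ∈ Icc (0:ℝ) 1)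
    (hmono : MonotoneOn f (Icc (0:ℝ) 1))
    (hI : CondI f) :
    ∀ᵐ x ∂(volume.restrict (Icc (0:ℝ) 1)), x / 2 ≤ f x ∧ f x ≤ (x + 1) / 2 := by
  have hint : IntegrableOn f (Icc (0:ℝ) 1) := by
    apply Measure.integrableOn_of_bounded (M := 1)
    · simp
    · exact hfmeas.aestronglyMeasurable
    · filter_upwards [ae_restrict_mem measurableSet_Icc] with x hx
      have h := hf01 x hx
      rw [Real.norm_eq_abs, abs_le]
      constructor <;> linarith [h.1, h.2]
  have key : ∀ x ∈ Icc (0:ℝ) 1, x / 2 ≤ f x ∧ f x ≤ (x + 1) / 2 := by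
    intro x hx
    obtain ⟨hx0, hx1⟩ := hx
    have hfx := hf01 x ⟨hx0, hx1⟩
    -- lower bound
    have hlow : x / 2 ≤ f x := by
      rcases eq_or_lt_of_le hx0 with h0 | h0
      · linarith [hfx.1]
      · have hsub : Icc (0:ℝ) x ⊆ Icc 0 1 := Icc_subset_Icc le_rfl hx1
        have h1 := (hI (Icc 0 x) measurableSet_Icc hsub).1
        have hvol : (volume (Icc (0:ℝ) x)).toReal = x := by
          rw [Real.volume_Icc, ENNReal.toReal_ofReal (by linarith)]
          ring
        have h2 : ∫ y in Icc (0:ℝ) x, f y ≤ ∫ _ in Icc (0:ℝ) x, f x := by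
          apply setIntegral_mono_on (hint.mono_set hsub)
            (integrableOn_const (by rw [Real.volume_Icc]; exact ENNReal.ofReal_lt_top.ne))
            measurableSet_Icc
          intro y hy
          exact hmono (hsub hy) ⟨hx0, hx1⟩ hy.2
        rw [setIntegral_const, measureReal_def, hvol, smul_eq_mul] at h2
        rw [hvol] at h1
        nlinarith
    refine ⟨hlow, ?_⟩
    -- upper bound
    rcases eq_or_lt_of_le hx1 with h1 | h1
    · subst h1; linarith [hfx.2]
    · have heq := (hI (Icc 0 1) measurableSet_Icc (subset_refl _)).2
        (by rw [Real.volume_Icc]; norm_num)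
      have hvol1 : (volume (Icc (0:ℝ) 1)).toReal = 1 := by
        rw [Real.volume_Icc]; norm_num
      rw [hvol1] at heq
      norm_num at heq
      -- split the integral
      have hsub : Icc (0:ℝ) x ⊆ Icc 0 1 := Icc_subset_Icc le_rfl hx1
      have hsub' : Ioc x 1 ⊆ Icc (0:ℝ) 1 := fun y hy => ⟨le_trans hx0 hy.1.le, hy.2⟩
      have hsplit : (∫ y in Icc (0:ℝ) x, f y) + (∫ y in Ioc x 1, f y)
          = ∫ y in Icc (0:ℝ) 1, f y := by
        rw [← setIntegral_union]
        · rw [Icc_union_Ioc_eq_Icc hx0 hx1]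
        · exact Set.disjoint_left.2 (fun y hy hy' => absurd hy'.1 (not_lt.2 hy.2))
        · exact measurableSet_Ioc
        · exact hint.mono_set hsub
        · exact hint.mono_set hsub'
      have h1' := (hI (Icc 0 x) measurableSet_Icc hsub).1
      have hvolx : (volume (Icc (0:ℝ) x)).toReal = x := by
        rw [Real.volume_Icc, ENNReal.toReal_ofReal (by linarith)]; ring
      rw [hvolx] at h1'
      -- lower bound on tail integral by (1-x) * f x
      have h2 : ∫ _ in Ioc x 1, f x ≤ ∫ y in Ioc x 1, f y := by
        apply setIntegral_mono_on
          (integrableOn_const (by rw [Real.volume_Ioc]; exact ENNReal.ofReal_lt_top.ne))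
          (hint.mono_set hsub') measurableSet_Ioc
        intro y hy
        exact hmono ⟨hx0, hx1⟩ (hsub' hy) hy.1.le
      have hvolt : (volume (Ioc x 1)).toReal = 1 - x := by
        rw [Real.volume_Ioc, ENNReal.toReal_ofReal (by linarith)]
      rw [setIntegral_const, measureReal_def, hvolt, smul_eq_mul] at h2
      -- combine: (1-x) f x ≤ 1/2 - x^2/2 = (1-x)(1+x)/2
      have : (1 - x) * f x ≤ (1 - x) * ((x + 1) / 2) := by nlinarith
      exact le_of_mul_le_mul_left (by linarith [mul_comm (1-x) (f x)]) (by linarith : (0:ℝ) < 1 - x)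
  exact ae_restrict_of_forall_mem measurableSet_Icc key
end

section
/- Let f : [0,1] → [0,1] satisfy condition I. For each n ≥ 1 define dᵢ = n² ∫_{(i-1)/n}^{i/n} (f(x) − 1/(2n)) dx for i = 1,…,n. Then for every subset J ⊆ {1,…,n}, ∑_{i∈J} dᵢ ≥ |J|(|J|−1)/2, with equality for J = {1,…,n}. -/
open MeasureTheory Set

theorem stmt_5
    (f : ℝ → ℝ) (hfmeas : Measurable f)
    (hf01 : ∀ x ∈ Icc (0:ℝ) 1, f x ∈ Icc (0:ℝ) 1)
    (hI : CondI f)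
    (n : ℕ) (hn : 1 ≤ n)
    (d : Fin n → ℝ)
    (hd : ∀ i : Fin n,
      d i = (n : ℝ) ^ 2 * ∫ x in Icc ((i : ℝ) / n) (((i : ℝ) + 1) / n), (f x - 1 / (2 * n))) :
    (∀ J : Finset (Fin n),
        (J.card : ℝ) * ((J.card : ℝ) - 1) / 2 ≤ ∑ i ∈ J, d i) ∧
      ∑ i : Fin n, d i = (n : ℝ) * ((n : ℝ) - 1) / 2 := by
  have hn0 : (0:ℝ) < n := by exact_mod_cast Nat.lt_of_lt_of_le Nat.zero_lt_one hn
  set S : Fin n → Set ℝ := fun i => Ioc ((i:ℝ)/n) (((i:ℝ)+1)/n) with hS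
  have hsub : ∀ i : Fin n, S i ⊆ Icc (0:ℝ) 1 := by
    intro i x hx
    have h1 : (0:ℝ) ≤ (i:ℝ)/n := by positivity
    have hi : ((i:ℝ)+1) ≤ n := by exact_mod_cast i.isLt
    have h2 : ((i:ℝ)+1)/n ≤ 1 := by rw [div_le_one hn0]; exact hi
    exact ⟨le_of_lt (lt_of_le_of_lt h1 hx.1), le_trans hx.2 h2⟩
  have hvolS : ∀ i : Fin n, volume (S i) = ENNReal.ofReal (1/n) := by
    intro i
    rw [hS]
    simp only [Real.volume_Ioc]
    congr 1
    field_simp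
    ring
  have hintIcc : IntegrableOn f (Icc (0:ℝ) 1) volume := by
    apply Measure.integrableOn_of_bounded (M := 1)
    · simp
    · exact hfmeas.aestronglyMeasurable
    · filter_upwards [ae_restrict_mem measurableSet_Icc] with x hx
      have h := hf01 x hx
      rw [Real.norm_eq_abs, abs_le]
      exact ⟨by linarith [h.1], h.2⟩
  have hint : ∀ i : Fin n, IntegrableOn f (S i) volume :=
    fun i => hintIcc.mono_set (hsub i)
  have hdisj : ∀ i j : Fin n, i ≠ j → Disjoint (S i) (S j) := by
    intro i j hij
    rw [hS]
    simp only
    rw [Set.Ioc_disjoint_Ioc]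
    rcases lt_or_gt_of_ne hij with h | h
    · have hij' : ((i:ℝ)+1) ≤ (j:ℝ) := by exact_mod_cast Fin.lt_def.mp h
      calc min (((i:ℝ)+1)/n) (((j:ℝ)+1)/n) ≤ ((i:ℝ)+1)/n := min_le_left _ _
        _ ≤ (j:ℝ)/n := by gcongr
        _ ≤ max ((i:ℝ)/n) ((j:ℝ)/n) := le_max_right _ _
    · have hij' : ((j:ℝ)+1) ≤ (i:ℝ) := by exact_mod_cast Fin.lt_def.mp h
      calc min (((i:ℝ)+1)/n) (((j:ℝ)+1)/n) ≤ ((j:ℝ)+1)/n := min_le_right _ _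
        _ ≤ (i:ℝ)/n := by gcongr
        _ ≤ max ((i:ℝ)/n) ((j:ℝ)/n) := le_max_left _ _
  -- rewrite d
  have hd' : ∀ i : Fin n, d i = (n:ℝ)^2 * (∫ x in S i, f x) - 1/2 := by
    intro i
    rw [hd i, MeasureTheory.integral_Icc_eq_integral_Ioc]
    have hconst : IntegrableOn (fun _ : ℝ => 1 / (2*(n:ℝ))) (S i) volume :=
      (integrableOn_const_iff).mpr (Or.inr (by rw [hvolS i]; exact ENNReal.ofReal_lt_top))
    rw [show (Ioc ((i:ℝ)/n) (((i:ℝ)+1)/n)) = S i from rfl]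
    rw [MeasureTheory.integral_sub (hint i) hconst]
    rw [MeasureTheory.setIntegral_const]
    rw [measureReal_def, hvolS i, ENNReal.toReal_ofReal (by positivity), smul_eq_mul]
    field_simp
  -- key facts for a subset J
  have key : ∀ J : Finset (Fin n),
      (∑ i ∈ J, d i = (n:ℝ)^2 * (∫ x in (⋃ i ∈ J, S i), f x) - (J.card:ℝ)/2) ∧
      volume (⋃ i ∈ J, S i) = (J.card : ENNReal) * ENNReal.ofReal (1/n) ∧
      MeasurableSet (⋃ i ∈ J, S i) ∧ (⋃ i ∈ J, S i) ⊆ Icc (0:ℝ) 1 := by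
    intro J
    have hpd : (J : Set (Fin n)).PairwiseDisjoint S := fun i _ j _ hij => hdisj i j hij
    have hmeas : ∀ i ∈ J, MeasurableSet (S i) := fun i _ => measurableSet_Ioc
    have hintB : (∫ x in (⋃ i ∈ J, S i), f x) = ∑ i ∈ J, ∫ x in S i, f x :=
      MeasureTheory.integral_biUnion_finset J hmeas hpd (fun i _ => hint i)
    have hvolB : volume (⋃ i ∈ J, S i) = (J.card : ENNReal) * ENNReal.ofReal (1/n) := by
      rw [measure_biUnion_finset hpd hmeas]
      simp [hvolS, Finset.sum_const, nsmul_eq_mul]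
    refine ⟨?_, hvolB, J.measurableSet_biUnion hmeas, iUnion₂_subset fun i _ => hsub i⟩
    rw [hintB, Finset.mul_sum]
    rw [Finset.sum_congr rfl (fun i _ => hd' i)]
    rw [Finset.sum_sub_distrib]
    simp [Finset.sum_const, nsmul_eq_mul]
    ring
  constructor
  · intro J
    obtain ⟨hsum, hvolB, hmeasB, hsubB⟩ := key J
    have htr : (volume (⋃ i ∈ J, S i)).toReal = (J.card : ℝ) / n := by
      rw [hvolB, ENNReal.toReal_mul, ENNReal.toReal_ofReal (by positivity)]
      simp [div_eq_mul_inv, one_mul]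
    have hineq := (hI _ hmeasB hsubB).1
    rw [htr] at hineq
    rw [hsum]
    have h2 : ((J.card:ℝ)/n)^2/2 * (n:ℝ)^2 = (J.card:ℝ)^2/2 := by
      field_simp
    nlinarith [sq_nonneg ((J.card:ℝ)/n), hn0]
  · obtain ⟨hsum, hvolB, hmeasB, hsubB⟩ := key Finset.univ
    have hcard : (Finset.univ : Finset (Fin n)).card = n := Finset.card_univ.trans (Fintype.card_fin n)
    have hvol1 : volume (⋃ i ∈ (Finset.univ : Finset (Fin n)), S i) = 1 := by
      rw [hvolB, hcard, ← ENNReal.ofReal_natCast, ← ENNReal.ofReal_mul (by positivity)]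
      rw [mul_one_div, div_self (ne_of_gt hn0), ENNReal.ofReal_one]
    have heq := (hI _ hmeasB hsubB).2 hvol1
    rw [hvol1] at heq
    simp only [ENNReal.toReal_one, one_pow] at heq
    rw [hsum, hcard] at *
    rw [heq]
    field_simp
end

section
/- (Landau's theorem) A sequence (d₁,…,dₙ) of non-negative integers is the score sequence of some tournament on n vertices if and only if ∑_{i∈J} dᵢ ≥ binom(|J|,2) for all subsets J ⊆ {1,…,n}, with equality for J = {1,…,n}. -/
open Finset

variable {n : ℕ}

def Tour (r : Fin n → Fin n → Bool) : Prop :=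
  (∀ u, r u u = false) ∧ ∀ u v, u ≠ v → (r u v = true ↔ r v u = false)

def sc (r : Fin n → Fin n → Bool) (i : Fin n) : ℕ :=
  (Finset.univ.filter fun v => r i v = true).card

lemma two_mul_choose_two (k : ℕ) : 2 * k.choose 2 = k * (k - 1) := by
  rcases k with _ | m
  · simp
  · rw [Nat.choose_two_right]
    simp only [Nat.succ_sub_one]
    rw [Nat.mul_div_cancel']
    rw [Nat.mul_comm]
    exact (Nat.even_mul_succ_self m).two_dvd

lemma count_pairs (r : Fin n → Fin n → Bool) (hT : Tour r) (J : Finset (Fin n)) :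
    2 * ∑ i ∈ J, (J.filter fun v => r i v = true).card = J.card * (J.card - 1) := by
  obtain ⟨hdiag, hasym⟩ := hT
  have hswap : ∑ i ∈ J, (J.filter fun v => r v i = true).card
      = ∑ i ∈ J, (J.filter fun v => r i v = true).card := by
    simp only [Finset.card_filter]
    exact Finset.sum_comm
  have key : ∀ i ∈ J, (J.filter fun v => r i v = true).card
      + (J.filter fun v => r v i = true).card = J.card - 1 := by
    intro i hi
    have hpt : ∀ v ∈ J, ((if r i v = true then 1 else 0) + (if r v i = true then 1 else 0) : ℕ)
        = if v = i then 0 else 1 := by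
      intro v _
      by_cases hvi : v = i
      · subst hvi; simp [hdiag v]
      · have := hasym i v (Ne.symm hvi)
        cases h1 : r i v <;> cases h2 : r v i <;> simp_all
    rw [Finset.card_filter, Finset.card_filter, ← Finset.sum_add_distrib,
      Finset.sum_congr rfl hpt]
    have h1 := Finset.add_sum_erase J (fun v => if v = i then (0:ℕ) else 1) hi
    have h2 : ∑ v ∈ J.erase i, (if v = i then (0:ℕ) else 1) = (J.erase i).card := by
      rw [Finset.card_eq_sum_ones]
      exact Finset.sum_congr rfl (fun v hv => by simp [(Finset.mem_erase.mp hv).1])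
    have h3 : (J.erase i).card = J.card - 1 := Finset.card_erase_of_mem hi
    norm_num at h1
    omega
  calc 2 * ∑ i ∈ J, (J.filter fun v => r i v = true).card
      = ∑ i ∈ J, (J.filter fun v => r i v = true).card
        + ∑ i ∈ J, (J.filter fun v => r v i = true).card := by rw [hswap]; ring
    _ = ∑ i ∈ J, ((J.filter fun v => r i v = true).card
        + (J.filter fun v => r v i = true).card) := by rw [Finset.sum_add_distrib]
    _ = ∑ _i ∈ J, (J.card - 1) := Finset.sum_congr rfl key
    _ = J.card * (J.card - 1) := by rw [Finset.sum_const, smul_eq_mul]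

lemma landau_of_tour {r : Fin n → Fin n → Bool} (hT : Tour r) (J : Finset (Fin n)) :
    J.card.choose 2 ≤ ∑ i ∈ J, sc r i := by
  have h1 := count_pairs r hT J
  have h2 : ∑ i ∈ J, (J.filter fun v => r i v = true).card ≤ ∑ i ∈ J, sc r i :=
    Finset.sum_le_sum fun i _ => Finset.card_le_card
      (Finset.filter_subset_filter _ (Finset.subset_univ J))
  have h3 := two_mul_choose_two J.card
  omega

lemma sum_sc_eq {r : Fin n → Fin n → Bool} (hT : Tour r) :
    ∑ i, sc r i = n.choose 2 := by
  have h1 := count_pairs r hT Finset.univ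
  have h3 := two_mul_choose_two n
  simp only [Finset.card_univ, Fintype.card_fin] at h1
  have : ∑ i, sc r i = ∑ i, ((Finset.univ : Finset (Fin n)).filter fun v => r i v = true).card := rfl
  omega

def flipE (r : Fin n → Fin n → Bool) (a b : Fin n) : Fin n → Fin n → Bool :=
  fun u v => if u = a ∧ v = b then false else if u = b ∧ v = a then true else r u v

lemma flip_eq_of {r : Fin n → Fin n → Bool} {a b u v : Fin n}
    (h1 : ¬(u = a ∧ v = b)) (h2 : ¬(u = b ∧ v = a)) : flipE r a b u v = r u v := by
  simp [flipE, h1, h2]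

lemma flip_Tour {r : Fin n → Fin n → Bool} {a b : Fin n} (hab : a ≠ b) (hT : Tour r) :
    Tour (flipE r a b) := by
  obtain ⟨hdiag, hasym⟩ := hT
  constructor
  · intro u
    simp only [flipE]
    split_ifs with h1 h2
    · rfl
    · exact absurd (h2.1.symm.trans h2.2) (Ne.symm hab)
    · exact hdiag u
  · intro u v huv
    by_cases h1 : u = a ∧ v = b
    · obtain ⟨rfl, rfl⟩ := h1
      simp [flipE, hab, Ne.symm hab]
    · by_cases h2 : u = b ∧ v = a
      · obtain ⟨rfl, rfl⟩ := h2
        simp [flipE, hab, Ne.symm hab]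
      · rw [flip_eq_of h1 h2, flip_eq_of (fun h => h2 ⟨h.2, h.1⟩) (fun h => h1 ⟨h.2, h.1⟩)]
        exact hasym u v huv

lemma sc_flip_other {r : Fin n → Fin n → Bool} {a b x : Fin n}
    (hxa : x ≠ a) (hxb : x ≠ b) : sc (flipE r a b) x = sc r x := by
  unfold sc
  congr 1
  apply Finset.filter_congr
  intro v _
  rw [flip_eq_of (fun h => hxa h.1) (fun h => hxb h.1)]

lemma sc_flip_a {r : Fin n → Fin n → Bool} {a b : Fin n} (hab : a ≠ b)
    (hr : r a b = true) : sc (flipE r a b) a = sc r a - 1 := by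
  unfold sc
  have hset : (Finset.univ.filter fun v => flipE r a b a v = true)
      = (Finset.univ.filter fun v => r a v = true).erase b := by
    ext v
    simp only [Finset.mem_filter, Finset.mem_erase, Finset.mem_univ, true_and, flipE]
    by_cases hvb : v = b
    · subst hvb; simp [hab]
    · simp [hvb, hab]
  rw [hset, Finset.card_erase_of_mem]
  simp [hr]

lemma sc_flip_b {r : Fin n → Fin n → Bool} {a b : Fin n} (hab : a ≠ b) (hT : Tour r)
    (hr : r a b = true) : sc (flipE r a b) b = sc r b + 1 := by
  have hba : r b a = false := ((hT.2 a b hab).mp hr)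
  unfold sc
  have hset : (Finset.univ.filter fun v => flipE r a b b v = true)
      = insert a (Finset.univ.filter fun v => r b v = true) := by
    ext v
    simp only [Finset.mem_filter, Finset.mem_insert, Finset.mem_univ, true_and, flipE]
    by_cases hva : v = a
    · subst hva; simp [Ne.symm hab]
    · simp [hva, Ne.symm hab, fun h : b = a => hab h.symm]
  rw [hset, Finset.card_insert_of_notMem]
  simp [hba]

lemma chain_imp {α : Type*} {R S : α → α → Prop} :
    ∀ {a : α} {l : List α}, List.Chain R a l →
      (∀ u v, u ∈ a :: l → v ∈ l → R u v → S u v) → List.Chain S a l := by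
  intro a l
  induction l generalizing a with
  | nil => intro _ _; exact List.Chain.nil
  | cons w rest ih =>
    intro h hm
    obtain ⟨h1, h2⟩ := List.chain_cons.mp h
    refine List.chain_cons.mpr ⟨hm a w (by simp) (by simp) h1, ih h2 ?_⟩
    intro u v hu hv hr
    exact hm u v (List.mem_cons_of_mem _ hu) (List.mem_cons_of_mem _ hv) hr

lemma exists_nodup_chain {α : Type*} {step : α → α → Prop} {a b : α}
    (h : Relation.ReflTransGen step a b) :
    ∃ l : List α, List.Chain step a l ∧ (a :: l).getLast (by simp) = b ∧ (a :: l).Nodup := by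
  induction h using Relation.ReflTransGen.head_induction_on with
  | refl => exact ⟨[], List.Chain.nil, rfl, by simp⟩
  | @head a' c h' hr ih =>
    obtain ⟨l, hc, hl, hn⟩ := ih
    by_cases hmem : a' ∈ c :: l
    · obtain ⟨s, t, hst⟩ := List.append_of_mem hmem
      have hsuf : (a' :: t) <:+ (c :: l) := by rw [hst]; exact List.suffix_append s (a' :: t)
      refine ⟨t, ?_, ?_, ?_⟩
      · exact (List.IsChain.suffix (l := c :: l) hc hsuf : List.Chain' step (a' :: t))
      · rw [← hl, List.getLast_congr _ _ hst]
        exact (List.getLast_append_of_ne_nil (by simp) (by simp)).symm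
      · exact List.Nodup.sublist hsuf.sublist hn
    · refine ⟨c :: l, List.chain_cons.mpr ⟨h', hc⟩, ?_, List.nodup_cons.mpr ⟨hmem, hn⟩⟩
      rw [List.getLast_cons (by simp)]
      exact hl

def dev (d : Fin n → ℕ) (r : Fin n → Fin n → Bool) (i : Fin n) : ℕ :=
  (sc r i - d i) + (d i - sc r i)

def Delta (d : Fin n → ℕ) (r : Fin n → Fin n → Bool) : ℕ := ∑ i, dev d r i

lemma sum_pair (f : Fin n → ℕ) {a w : Fin n} (h : a ≠ w) :
    ∑ x, f x = f a + (f w + ∑ x ∈ (Finset.univ.erase a).erase w, f x) := by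
  rw [Finset.add_sum_erase _ f
    (Finset.mem_erase.mpr ⟨Ne.symm h, Finset.mem_univ w⟩),
    Finset.add_sum_erase _ f (Finset.mem_univ a)]

lemma reduce (d : Fin n → ℕ) : ∀ (l : List (Fin n)) (r : Fin n → Fin n → Bool) (a : Fin n),
    Tour r → List.Chain (fun u v => r u v = true) a l → (a :: l).Nodup →
    d a < sc r a →
    sc r ((a :: l).getLast (by simp)) < d ((a :: l).getLast (by simp)) →
    ∃ r', Tour r' ∧ Delta d r' < Delta d r := by
  intro l
  induction l with
  | nil =>
    intro r a _ _ _ hda hb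
    simp only [List.getLast_singleton] at hb
    omega
  | cons w rest ih =>
    intro r a hT hc hn hda hb
    obtain ⟨hraw, hcw⟩ := List.chain_cons.mp hc
    have hna : a ∉ w :: rest := (List.nodup_cons.mp hn).1
    have hn2 : (w :: rest).Nodup := (List.nodup_cons.mp hn).2
    have haw : a ≠ w := fun h => hna (h ▸ List.mem_cons_self (a := w) (l := rest))
    have hblast : ((a :: w :: rest).getLast (by simp))
        = ((w :: rest).getLast (by simp)) := List.getLast_cons (by simp)
    rw [hblast] at hb
    set b := ((w :: rest).getLast (by simp)) with hbdef
    have hb_mem : b ∈ w :: rest := List.getLast_mem _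
    have hba : b ≠ a := fun h => hna (h ▸ hb_mem)
    set r₁ := flipE r a w with hr₁
    have hT₁ : Tour r₁ := flip_Tour haw hT
    have hsa : sc r₁ a = sc r a - 1 := sc_flip_a haw hraw
    have hsw : sc r₁ w = sc r w + 1 := sc_flip_b haw hT hraw
    have hrest : ∀ x, x ≠ a → x ≠ w → sc r₁ x = sc r x :=
      fun x h1 h2 => sc_flip_other h1 h2
    have e1 : Delta d r₁ = dev d r₁ a + (dev d r₁ w
        + ∑ x ∈ (Finset.univ.erase a).erase w, dev d r₁ x) := sum_pair _ haw
    have e2 : Delta d r = dev d r a + (dev d r w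
        + ∑ x ∈ (Finset.univ.erase a).erase w, dev d r x) := sum_pair _ haw
    have e3 : ∑ x ∈ (Finset.univ.erase a).erase w, dev d r₁ x
        = ∑ x ∈ (Finset.univ.erase a).erase w, dev d r x := by
      refine Finset.sum_congr rfl fun x hx => ?_
      have hx1 := (Finset.mem_erase.mp hx).1
      have hx2 := (Finset.mem_erase.mp (Finset.mem_erase.mp hx).2).1
      unfold dev
      rw [hrest x hx2 hx1]
    have da1 : dev d r₁ a = sc r a - 1 - d a + (d a - (sc r a - 1)) := by
      unfold dev; rw [hsa]
    have da2 : dev d r a = sc r a - d a + (d a - sc r a) := rfl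
    have dw1 : dev d r₁ w = sc r w + 1 - d w + (d w - (sc r w + 1)) := by
      unfold dev; rw [hsw]
    have dw2 : dev d r w = sc r w - d w + (d w - sc r w) := rfl
    by_cases hw : sc r w < d w
    · exact ⟨r₁, hT₁, by omega⟩
    · -- sc r w ≥ d w : continue along the path
      by_cases hrnil : rest = []
      · exfalso
        subst hrnil
        have hbw : b = w := rfl
        rw [hbw] at hb
        omega
      · have hb_tail : b ∈ rest := by
          rw [hbdef, List.getLast_cons hrnil]
          exact List.getLast_mem hrnil
        have hwb : w ≠ b := fun h => (List.nodup_cons.mp hn2).1 (h ▸ hb_tail)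
        have hc₁ : List.Chain (fun u v => r₁ u v = true) w rest := by
          refine chain_imp hcw ?_
          intro u v hu hv hstep
          have hu' : u ≠ a := fun h => hna (h ▸ hu)
          have hv' : v ≠ a := fun h => hna (h ▸ List.mem_cons_of_mem w hv)
          rw [hr₁, flip_eq_of (fun h => hu' h.1) (fun h => hv' h.2)]
          exact hstep
        have hgl : ((w :: rest).getLast (by simp)) = b := rfl
        obtain ⟨r', hT', hlt⟩ := ih r₁ w hT₁ hc₁ hn2 (by omega)
          (by rw [hgl, hrest b hba (Ne.symm hwb)]; exact hb)
        exact ⟨r', hT', by omega⟩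

lemma exists_tour (d : Fin n → ℕ)
    (hL : ∀ J : Finset (Fin n), J.card.choose 2 ≤ ∑ i ∈ J, d i)
    (hs : ∑ i, d i = n.choose 2) : ∃ r, Tour r ∧ ∀ i, sc r i = d i := by
  classical
  have hbase : ∃ r : Fin n → Fin n → Bool, Tour r := by
    refine ⟨fun u v => decide (u < v), fun u => by simp, fun u v huv => ?_⟩
    simp only [decide_eq_true_eq, decide_eq_false_iff_not]
    constructor
    · exact fun h => not_lt_of_gt h
    · intro h
      rcases lt_or_gt_of_ne huv with h' | h'
      · exact h'
      · exact absurd h' h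
  obtain ⟨r₀, hr₀⟩ := hbase
  suffices key : ∀ N (r : Fin n → Fin n → Bool), Tour r → Delta d r ≤ N →
      ∃ r', Tour r' ∧ ∀ i, sc r' i = d i from key (Delta d r₀) r₀ hr₀ le_rfl
  intro N
  induction N with
  | zero =>
    intro r hT h0
    refine ⟨r, hT, fun i => ?_⟩
    have := Finset.sum_eq_zero_iff.mp (Nat.le_zero.mp h0) i (Finset.mem_univ i)
    unfold dev at this
    omega
  | succ N ih =>
    intro r hT hN
    by_cases hΔ : Delta d r ≤ N
    · exact ih r hT hΔ
    · have hpos : 0 < Delta d r := by omega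
      have hscsum : ∑ i, sc r i = ∑ i, d i := by rw [hs, sum_sc_eq hT]
      have hA : ∃ a, d a < sc r a := by
        by_contra hno
        push_neg at hno
        have heq : ∀ i, sc r i = d i := by
          by_contra hne
          push_neg at hne
          obtain ⟨j, hj⟩ := hne
          have : ∑ i, sc r i < ∑ i, d i :=
            Finset.sum_lt_sum (fun i _ => hno i)
              ⟨j, Finset.mem_univ j, lt_of_le_of_ne (hno j) hj⟩
          omega
        have hz : Delta d r = 0 :=
          Finset.sum_eq_zero (fun i _ => by unfold dev; rw [heq i]; omega)
        omega
      set S : Finset (Fin n) := Finset.univ.filter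
        (fun v => ∃ a, d a < sc r a ∧
          Relation.ReflTransGen (fun u w => r u w = true) a v) with hSdef
      have hexb : ∃ b ∈ S, sc r b < d b := by
        by_contra hnob
        push_neg at hnob
        have hclosed : ∀ v ∈ S, ∀ w, r v w = true → w ∈ S := by
          intro v hv w hw
          rw [hSdef, Finset.mem_filter] at hv ⊢
          obtain ⟨-, a, ha1, ha2⟩ := hv
          exact ⟨Finset.mem_univ w, a, ha1, ha2.tail hw⟩
        have hscS : ∀ v ∈ S, sc r v = (S.filter fun w => r v w = true).card := by
          intro v hv
          unfold sc
          congr 1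
          ext w
          simp only [Finset.mem_filter, Finset.mem_univ, true_and]
          exact ⟨fun h => ⟨hclosed v hv w h, h⟩, fun h => h.2⟩
        have hcount := count_pairs r hT S
        have hsum2 : 2 * ∑ v ∈ S, sc r v = S.card * (S.card - 1) := by
          rw [Finset.sum_congr rfl hscS]
          exact hcount
        have hdlt : ∑ v ∈ S, d v < ∑ v ∈ S, sc r v := by
          obtain ⟨a, ha⟩ := hA
          have haS : a ∈ S := by
            rw [hSdef, Finset.mem_filter]
            exact ⟨Finset.mem_univ a, a, ha, Relation.ReflTransGen.refl⟩
          exact Finset.sum_lt_sum (fun v hv => hnob v hv) ⟨a, haS, ha⟩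
        have hLS := hL S
        have h2c := two_mul_choose_two S.card
        omega
      obtain ⟨b, hbS, hbd⟩ := hexb
      rw [hSdef, Finset.mem_filter] at hbS
      obtain ⟨-, a, ha, hreach⟩ := hbS
      obtain ⟨l, hc, hl, hnd⟩ := exists_nodup_chain hreach
      obtain ⟨r', hT', hlt⟩ := reduce d l r a hT hc hnd ha (by rw [hl]; exact hbd)
      exact ih r' hT' (by omega)

theorem stmt_7 (n : ℕ) (d : Fin n → ℕ) :
    (∃ r : Fin n → Fin n → Bool,
        (∀ u, r u u = false) ∧
        (∀ u v, u ≠ v → (r u v = true ↔ r v u = false)) ∧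
        (∀ i : Fin n, d i = (Finset.univ.filter fun v => r i v = true).card)) ↔
      ((∀ J : Finset (Fin n), Nat.choose J.card 2 ≤ ∑ i ∈ J, d i) ∧
        ∑ i : Fin n, d i = Nat.choose n 2) := by
  constructor
  · rintro ⟨r, h1, h2, h3⟩
    have hT : Tour r := ⟨h1, h2⟩
    have hd : ∀ i, d i = sc r i := h3
    constructor
    · intro J
      rw [Finset.sum_congr rfl (fun i _ => hd i)]
      exact landau_of_tour hT J
    · rw [Finset.sum_congr rfl (fun i _ => hd i)]
      exact sum_sc_eq hT
  · rintro ⟨hL, hs⟩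
    obtain ⟨r, ⟨h1, h2⟩, hsc⟩ := exists_tour d hL hs
    exact ⟨r, h1, h2, fun i => (hsc i).symm⟩
end

section
/- Let f : [0,1] → [0,1] be a measurable function satisfying condition I, and let f* denote its decreasing rearrangement. Then f* also satisfies condition I. -/
open MeasureTheory Set
open scoped ENNReal

/-- The decreasing rearrangement of `f : [0,1] → [0,1]`:
`f*(t) = inf {λ ∈ [0,1] : μ{x ∈ [0,1] : f x > λ} ≤ t}`. -/
noncomputable def decRearrangement (f : ℝ → ℝ) (t : ℝ) : ℝ :=
  sInf {l : ℝ | l ∈ Icc (0:ℝ) 1 ∧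
    volume {x ∈ Icc (0:ℝ) 1 | l < f x} ≤ ENNReal.ofReal t}

namespace StmtAux10

/-- distribution function -/
noncomputable def mf (f : ℝ → ℝ) (l : ℝ) : ℝ≥0∞ := volume {x ∈ Icc (0:ℝ) 1 | l < f x}

lemma measSet (f : ℝ → ℝ) (hf : Measurable f) (l : ℝ) :
    MeasurableSet {x ∈ Icc (0:ℝ) 1 | l < f x} :=
  measurableSet_Icc.inter (measurableSet_lt measurable_const hf)

lemma mf_anti (f : ℝ → ℝ) : Antitone (mf f) := fun l l' h =>
  measure_mono fun x hx => ⟨hx.1, lt_of_le_of_lt h hx.2⟩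

lemma volIcc : volume (Icc (0:ℝ) 1) = 1 := by
  rw [Real.volume_Icc]; norm_num

lemma mf_le_one (f : ℝ → ℝ) (l : ℝ) : mf f l ≤ 1 := by
  have : mf f l ≤ volume (Icc (0:ℝ) 1) := measure_mono (sep_subset _ _)
  rwa [volIcc] at this

lemma mf_ne_top (f : ℝ → ℝ) (l : ℝ) : mf f l ≠ ⊤ :=
  (lt_of_le_of_lt (mf_le_one f l) ENNReal.one_lt_top).ne

lemma mf_eq_zero (f : ℝ → ℝ) (hf01 : ∀ x ∈ Icc (0:ℝ) 1, f x ∈ Icc (0:ℝ) 1)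
    {l : ℝ} (hl : 1 ≤ l) : mf f l = 0 := by
  have hemp : {x ∈ Icc (0:ℝ) 1 | l < f x} = ∅ := by
    ext x
    simp only [mem_sep_iff, mem_empty_iff_false, iff_false, not_and]
    intro hx hlt
    exact absurd (hf01 x hx).2 (not_le.mpr (lt_of_le_of_lt hl hlt))
  rw [mf, hemp, measure_empty]

/-- right continuity -/
lemma mf_right (f : ℝ → ℝ) {l : ℝ} {c : ℝ≥0∞} (h : ∀ l', l < l' → mf f l' ≤ c) :
    mf f l ≤ c := by
  have hU : {x ∈ Icc (0:ℝ) 1 | l < f x}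
      = ⋃ n : ℕ, {x ∈ Icc (0:ℝ) 1 | l + 1/(n+1) < f x} := by
    ext x
    simp only [mem_sep_iff, mem_iUnion]
    constructor
    · rintro ⟨hx, hlt⟩
      obtain ⟨n, hn⟩ := exists_nat_one_div_lt (sub_pos.mpr hlt)
      exact ⟨n, hx, by linarith⟩
    · rintro ⟨n, hx, hlt⟩
      have hpos : (0:ℝ) < 1/(n+1) := by positivity
      exact ⟨hx, by linarith⟩
  have hmono : Monotone (fun n : ℕ => {x ∈ Icc (0:ℝ) 1 | l + 1/(n+1) < f x}) := by
    intro m n hmn x hx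
    have h1 : (1:ℝ)/(n+1) ≤ 1/(m+1) := by
      apply one_div_le_one_div_of_le (by positivity)
      exact_mod_cast by exact_mod_cast add_le_add_left (Nat.cast_le.mpr hmn) 1
    exact ⟨hx.1, lt_of_le_of_lt (by linarith [hx.2]) hx.2⟩
  rw [mf, hU, (hmono.directed_le).measure_iUnion]
  refine iSup_le fun n => h _ ?_
  have : (0:ℝ) < 1/(n+1) := by positivity
  linarith

section withf

variable {f : ℝ → ℝ} (hf01 : ∀ x ∈ Icc (0:ℝ) 1, f x ∈ Icc (0:ℝ) 1)

lemma dec_set (t : ℝ) : {l : ℝ | l ∈ Icc (0:ℝ) 1 ∧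
    volume {x ∈ Icc (0:ℝ) 1 | l < f x} ≤ ENNReal.ofReal t}
    = {l : ℝ | l ∈ Icc (0:ℝ) 1 ∧ mf f l ≤ ENNReal.ofReal t} := rfl

include hf01 in
lemma one_mem (t : ℝ) : (1:ℝ) ∈ {l : ℝ | l ∈ Icc (0:ℝ) 1 ∧ mf f l ≤ ENNReal.ofReal t} := by
  refine ⟨⟨zero_le_one, le_refl 1⟩, ?_⟩
  rw [mf_eq_zero f hf01 le_rfl]
  exact zero_le

lemma bddBelowS (t : ℝ) :
    BddBelow {l : ℝ | l ∈ Icc (0:ℝ) 1 ∧ mf f l ≤ ENNReal.ofReal t} :=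
  ⟨0, fun x hx => hx.1.1⟩

include hf01 in
lemma dec_nonneg (t : ℝ) : 0 ≤ decRearrangement f t := by
  rw [decRearrangement, dec_set]
  exact le_csInf ⟨1, one_mem hf01 t⟩ fun b hb => hb.1.1

include hf01 in
lemma dec_le_one (t : ℝ) : decRearrangement f t ≤ 1 := by
  rw [decRearrangement, dec_set]
  exact csInf_le (bddBelowS t) (one_mem hf01 t)

include hf01 in
lemma dec_anti : Antitone (decRearrangement f) := by
  intro t t' h
  rw [decRearrangement, decRearrangement, dec_set, dec_set]
  refine csInf_le_csInf (bddBelowS t') ⟨1, one_mem hf01 t⟩ ?_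
  intro l hl
  exact ⟨hl.1, hl.2.trans (ENNReal.ofReal_le_ofReal h)⟩

include hf01 in
lemma dec_le_iff {t l : ℝ} (hl : 0 ≤ l) :
    decRearrangement f t ≤ l ↔ mf f l ≤ ENNReal.ofReal t := by
  rw [decRearrangement, dec_set]
  constructor
  · intro h
    refine mf_right f fun l' hl' => ?_
    rcases le_or_gt l' 1 with h1 | h1
    · have hlt : sInf {l : ℝ | l ∈ Icc (0:ℝ) 1 ∧ mf f l ≤ ENNReal.ofReal t} < l' :=
        lt_of_le_of_lt h hl'
      obtain ⟨b, hb, hbl⟩ := (csInf_lt_iff (bddBelowS t) ⟨1, one_mem hf01 t⟩).mp hlt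
      exact le_trans (mf_anti f hbl.le) hb.2
    · have : mf f l' ≤ mf f 1 := mf_anti f h1.le
      rw [mf_eq_zero f hf01 le_rfl] at this
      exact le_trans this (zero_le)
  · intro h
    rcases le_or_gt l 1 with h1 | h1
    · exact csInf_le (bddBelowS t) ⟨⟨hl, h1⟩, h⟩
    · exact le_trans (csInf_le (bddBelowS t) (one_mem hf01 t)) h1.le

include hf01 in
lemma dec_dist (hfmeas : Measurable f) {l : ℝ} (hl : 0 < l) :
    volume {t ∈ Icc (0:ℝ) 1 | l < decRearrangement f t} = mf f l := by
  have hne : mf f l ≠ ⊤ := mf_ne_top f l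
  set r := (mf f l).toReal with hr
  have hr1 : r ≤ 1 := by
    have := ENNReal.toReal_mono (by simp) (mf_le_one f l)
    simpa using this
  have hset : {t ∈ Icc (0:ℝ) 1 | l < decRearrangement f t} = Ico 0 r := by
    ext t
    simp only [mem_sep_iff, mem_Icc, mem_Ico]
    constructor
    · rintro ⟨⟨ht0, ht1⟩, hlt⟩
      refine ⟨ht0, ?_⟩
      by_contra hcon
      push_neg at hcon
      have hle : mf f l ≤ ENNReal.ofReal t := by
        rw [← ENNReal.ofReal_toReal hne]
        exact ENNReal.ofReal_le_ofReal hcon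
      exact absurd ((dec_le_iff hf01 hl.le).mpr hle) (not_le.mpr hlt)
    · rintro ⟨ht0, htr⟩
      refine ⟨⟨ht0, le_trans htr.le hr1⟩, ?_⟩
      by_contra hcon
      push_neg at hcon
      have h2 := (dec_le_iff hf01 hl.le).mp hcon
      have h3 : r ≤ t := ENNReal.toReal_le_of_le_ofReal ht0 h2
      linarith
  rw [hset, Real.volume_Ico, sub_zero, hr, ENNReal.ofReal_toReal hne]

end withf

/-- layer cake on a subset -/
lemma lint_layer {h : ℝ → ℝ} (hmeas : Measurable h)
    {S : Set ℝ} (hS : MeasurableSet S) (hpos : ∀ x ∈ S, 0 ≤ h x) :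
    ∫⁻ x in S, ENNReal.ofReal (h x) = ∫⁻ l in Ioi (0:ℝ), volume (S ∩ {x | l < h x}) := by
  have key := lintegral_eq_lintegral_meas_lt (volume.restrict S)
    ((ae_restrict_iff' hS).2 (Filter.Eventually.of_forall hpos)) hmeas.aemeasurable
  rw [key]
  refine setLIntegral_congr_fun measurableSet_Ioi (fun l _ => ?_)
  rw [Measure.restrict_apply (measurableSet_lt measurable_const hmeas), inter_comm]

/-- bounded lintegrals are finite -/
lemma lint_le_one {h : ℝ → ℝ} {S : Set ℝ} (hS : MeasurableSet S) (hvol : volume S ≤ 1)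
    (hb : ∀ x ∈ S, h x ≤ 1) : ∫⁻ x in S, ENNReal.ofReal (h x) ≤ 1 := by
  calc ∫⁻ x in S, ENNReal.ofReal (h x) ≤ ∫⁻ _ in S, 1 :=
        setLIntegral_mono' hS fun x hx => ENNReal.ofReal_le_one.mpr (hb x hx)
    _ = volume S := by rw [setLIntegral_const, one_mul]
    _ ≤ 1 := hvol

lemma integral_eq_toReal {h : ℝ → ℝ} (hm : Measurable h) {S : Set ℝ} (hS : MeasurableSet S)
    (h0 : ∀ x ∈ S, 0 ≤ h x) :
    ∫ x in S, h x = (∫⁻ x in S, ENNReal.ofReal (h x)).toReal :=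
  integral_eq_lintegral_of_nonneg_ae ((ae_restrict_iff' hS).2 (Filter.Eventually.of_forall h0))
    hm.aestronglyMeasurable

lemma integrableOn_of_bounded' {h : ℝ → ℝ} (hm : Measurable h) {S : Set ℝ}
    (hS : MeasurableSet S) (hvol : volume S ≠ ⊤) (hb : ∀ x ∈ S, |h x| ≤ 1) :
    IntegrableOn h S := by
  haveI : IsFiniteMeasure (volume.restrict S) :=
    ⟨by rw [Measure.restrict_apply_univ]; exact lt_top_iff_ne_top.mpr hvol⟩
  refine Integrable.mono' (integrable_const 1) hm.aestronglyMeasurable ?_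
  refine (ae_restrict_iff' hS).2 (Filter.Eventually.of_forall fun x hx => ?_)
  rw [Real.norm_eq_abs]
  exact hb x hx


/-- Darboux property of Lebesgue measure on subsets of [0,1]. -/
lemma exists_slice {E : Set ℝ} (hE : MeasurableSet E) (hEsub : E ⊆ Icc (0:ℝ) 1)
    {r : ℝ≥0∞} (hr : r ≤ volume E) :
    ∃ A, A ⊆ E ∧ MeasurableSet A ∧ volume A = r := by
  have hEfin : volume E ≠ ⊤ := by
    refine (lt_of_le_of_lt (measure_mono hEsub) ?_).ne
    rw [Real.volume_Icc]; norm_num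
  have hrne : r ≠ ⊤ := (lt_of_le_of_lt hr (lt_top_iff_ne_top.mpr hEfin)).ne
  set G : ℝ → ℝ := fun u => (volume (E ∩ Icc 0 u)).toReal with hG
  have hfin : ∀ u : ℝ, volume (E ∩ Icc 0 u) ≠ ⊤ :=
    fun u => (lt_of_le_of_lt (measure_mono inter_subset_left)
      (lt_top_iff_ne_top.mpr hEfin)).ne
  have key : ∀ u v : ℝ, u ≤ v → G u ≤ G v ∧ G v - G u ≤ v - u := by
    intro u v huv
    have h1 : volume (E ∩ Icc 0 u) ≤ volume (E ∩ Icc 0 v) :=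
      measure_mono (inter_subset_inter_right _ (Icc_subset_Icc le_rfl huv))
    have hmono : G u ≤ G v := ENNReal.toReal_mono (hfin v) h1
    refine ⟨hmono, ?_⟩
    have hsub : E ∩ Icc 0 v ⊆ (E ∩ Icc 0 u) ∪ Ioc u v := by
      rintro x ⟨hxE, hx0, hxv⟩
      rcases le_or_gt x u with h | h
      · exact Or.inl ⟨hxE, hx0, h⟩
      · exact Or.inr ⟨h, hxv⟩
    have h2 : volume (E ∩ Icc 0 v) ≤ volume (E ∩ Icc 0 u) + ENNReal.ofReal (v - u) := by
      calc volume (E ∩ Icc 0 v) ≤ volume ((E ∩ Icc 0 u) ∪ Ioc u v) := measure_mono hsub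
        _ ≤ volume (E ∩ Icc 0 u) + volume (Ioc u v) := measure_union_le _ _
        _ = volume (E ∩ Icc 0 u) + ENNReal.ofReal (v - u) := by rw [Real.volume_Ioc]
    have h3 := ENNReal.toReal_mono (by
        refine ENNReal.add_ne_top.mpr ⟨hfin u, ENNReal.ofReal_ne_top⟩) h2
    rw [ENNReal.toReal_add (hfin u) ENNReal.ofReal_ne_top,
      ENNReal.toReal_ofReal (by linarith)] at h3
    simp only [hG] at *
    linarith
  have hlip : LipschitzWith 1 G := by
    refine LipschitzWith.of_dist_le_mul fun u v => ?_
    rw [NNReal.coe_one, one_mul, Real.dist_eq, Real.dist_eq]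
    rcases le_total u v with h | h
    · obtain ⟨h1, h2⟩ := key u v h
      rw [abs_sub_comm, abs_of_nonneg (by linarith), abs_sub_comm, abs_of_nonneg (by linarith)]
      linarith
    · obtain ⟨h1, h2⟩ := key v u h
      rw [abs_of_nonneg (by linarith), abs_of_nonneg (by linarith)]
      linarith
  have hG0 : G 0 = 0 := by
    have h0 : volume (E ∩ Icc (0:ℝ) 0) = 0 := by
      rw [Icc_self]
      exact measure_mono_null inter_subset_right (measure_singleton 0)
    simp only [hG, h0, ENNReal.toReal_zero]
  have hG1 : G 1 = (volume E).toReal := by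
    simp only [hG]
    rw [inter_eq_self_of_subset_left hEsub]
  have hmem : r.toReal ∈ Icc (G 0) (G 1) := by
    rw [hG0, hG1]
    exact ⟨ENNReal.toReal_nonneg, ENNReal.toReal_mono hEfin hr⟩
  obtain ⟨u, _, hGu⟩ := intermediate_value_Icc zero_le_one hlip.continuous.continuousOn hmem
  refine ⟨E ∩ Icc 0 u, inter_subset_left, hE.inter measurableSet_Icc, ?_⟩
  have := congrArg ENNReal.ofReal hGu
  rwa [hG, ENNReal.ofReal_toReal (hfin u), ENNReal.ofReal_toReal hrne] at this


/-- Hardy–Littlewood for an antitone function vs. the initial interval, lintegral level. -/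
lemma lint_le_interval {g : ℝ → ℝ} (hganti : Antitone g) (hg0 : ∀ t, 0 ≤ g t)
    {B : Set ℝ} (hB : MeasurableSet B) (hBsub : B ⊆ Icc (0:ℝ) 1) {s : ℝ}
    (hs0 : 0 ≤ s) (hsvol : volume B = ENNReal.ofReal s) :
    ∫⁻ t in B, ENNReal.ofReal (g t) ≤ ∫⁻ t in Icc 0 s, ENNReal.ofReal (g t) := by
  have hgmeas : Measurable g := hganti.measurable
  set I := Icc (0:ℝ) s with hI
  have hImeas : MeasurableSet I := measurableSet_Icc
  have hIvol : volume I = ENNReal.ofReal s := by rw [hI, Real.volume_Icc, sub_zero]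
  set c := ENNReal.ofReal (g s) with hc
  -- measures of the two "difference" pieces agree
  have hfin : volume (B ∩ I) ≠ ⊤ := by
    refine (lt_of_le_of_lt (measure_mono inter_subset_left) ?_).ne
    rw [hsvol]; exact ENNReal.ofReal_lt_top
  have hBsplit : volume (B ∩ I) + volume (B \ I) = volume B := measure_inter_add_diff B hImeas
  have hIsplit : volume (I ∩ B) + volume (I \ B) = volume I := measure_inter_add_diff I hB
  have hmeq : volume (B \ I) = volume (I \ B) := by
    have h1 : volume (B ∩ I) + volume (B \ I) = volume (B ∩ I) + volume (I \ B) := by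
      rw [hBsplit, hsvol, ← hIvol, ← hIsplit, inter_comm]
    exact (ENNReal.add_right_inj hfin).mp h1
  -- pointwise bounds
  have hub : ∫⁻ t in B \ I, ENNReal.ofReal (g t) ≤ c * volume (B \ I) := by
    calc ∫⁻ t in B \ I, ENNReal.ofReal (g t) ≤ ∫⁻ _ in B \ I, c := by
          refine setLIntegral_mono' (hB.diff hImeas) fun t ht => ?_
          refine ENNReal.ofReal_le_ofReal (hganti ?_)
          have ht1 := hBsub ht.1
          have : ¬(0 ≤ t ∧ t ≤ s) := by simpa [hI, mem_Icc] using ht.2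
          rcases le_or_gt t s with h | h
          · exact absurd ⟨ht1.1, h⟩ this
          · exact h.le
      _ = c * volume (B \ I) := by rw [setLIntegral_const]
  have hlb : c * volume (I \ B) ≤ ∫⁻ t in I \ B, ENNReal.ofReal (g t) := by
    calc c * volume (I \ B) = ∫⁻ _ in I \ B, c := by rw [setLIntegral_const]
      _ ≤ ∫⁻ t in I \ B, ENNReal.ofReal (g t) := by
          refine setLIntegral_mono' (hImeas.diff hB) fun t ht => ?_
          exact ENNReal.ofReal_le_ofReal (hganti ht.1.2)
  calc ∫⁻ t in B, ENNReal.ofReal (g t)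
      = (∫⁻ t in B ∩ I, ENNReal.ofReal (g t)) + ∫⁻ t in B \ I, ENNReal.ofReal (g t) :=
        (lintegral_inter_add_diff _ _ hImeas).symm
    _ ≤ (∫⁻ t in B ∩ I, ENNReal.ofReal (g t)) + c * volume (B \ I) := by
        exact add_le_add_right hub _
    _ = (∫⁻ t in I ∩ B, ENNReal.ofReal (g t)) + c * volume (I \ B) := by
        rw [inter_comm, hmeq]
    _ ≤ (∫⁻ t in I ∩ B, ENNReal.ofReal (g t)) + ∫⁻ t in I \ B, ENNReal.ofReal (g t) := by
        exact add_le_add_right hlb _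
    _ = ∫⁻ t in I, ENNReal.ofReal (g t) := lintegral_inter_add_diff _ _ hB

/-- Existence of a "superlevel-type" set of prescribed measure. -/
lemma exists_good_A {f : ℝ → ℝ} (hfmeas : Measurable f)
    (hf01 : ∀ x ∈ Icc (0:ℝ) 1, f x ∈ Icc (0:ℝ) 1) {s : ℝ} (hs0 : 0 ≤ s) (hs1 : s ≤ 1) :
    ∃ A, MeasurableSet A ∧ A ⊆ Icc (0:ℝ) 1 ∧ volume A = ENNReal.ofReal s ∧
      ∀ l, 0 < l → min (ENNReal.ofReal s) (mf f l) ≤ volume (A ∩ {x | l < f x}) := by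
  set l0 := decRearrangement f s with hl0
  have hl00 : 0 ≤ l0 := dec_nonneg hf01 s
  have hl01 : l0 ≤ 1 := dec_le_one hf01 s
  set G := {x ∈ Icc (0:ℝ) 1 | l0 < f x} with hGdef
  set H := {x ∈ Icc (0:ℝ) 1 | l0 ≤ f x} with hHdef
  have hGmeas : MeasurableSet G := measSet f hfmeas l0
  have hHmeas : MeasurableSet H :=
    measurableSet_Icc.inter (measurableSet_le measurable_const hfmeas)
  have hGH : G ⊆ H := fun x hx => ⟨hx.1, hx.2.le⟩
  have hHsub : H ⊆ Icc (0:ℝ) 1 := fun x hx => hx.1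
  have hGvol : volume G ≤ ENNReal.ofReal s := (dec_le_iff hf01 hl00).mp le_rfl
  have hHvol : ENNReal.ofReal s ≤ volume H := by
    rcases eq_or_lt_of_le hl00 with h0 | h0
    · have : H = Icc (0:ℝ) 1 := by
        ext x
        constructor
        · exact fun hx => hx.1
        · exact fun hx => ⟨hx, h0 ▸ (hf01 x hx).1⟩
      rw [this, volIcc]
      exact ENNReal.ofReal_le_one.mpr hs1
    · have hH_inter : H = ⋂ n : ℕ, {x ∈ Icc (0:ℝ) 1 | l0 - 1/(n+1) < f x} := by
        ext x
        simp only [hHdef, mem_sep_iff, mem_iInter]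
        constructor
        · rintro ⟨hx, hle⟩ n
          have : (0:ℝ) < 1/(n+1) := by positivity
          exact ⟨hx, by linarith⟩
        · intro hx
          refine ⟨(hx 0).1, ?_⟩
          by_contra hcon
          push_neg at hcon
          obtain ⟨n, hn⟩ := exists_nat_one_div_lt (sub_pos.mpr hcon)
          have := (hx n).2
          linarith
      have hdir : Directed (· ⊇ ·) (fun n : ℕ => {x ∈ Icc (0:ℝ) 1 | l0 - 1/(n+1) < f x}) := by
        refine (Antitone.directed_ge ?_)
        intro m n hmn x hx
        have h1 : (1:ℝ)/(n+1) ≤ 1/(m+1) := by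
          apply one_div_le_one_div_of_le (by positivity)
          exact_mod_cast add_le_add_left (Nat.cast_le.mpr hmn) 1
        exact ⟨hx.1, by linarith [hx.2]⟩
      have hvol_eq : volume H = ⨅ n : ℕ, mf f (l0 - 1/(n+1)) := by
        rw [hH_inter]
        exact hdir.measure_iInter (fun n => (measSet f hfmeas _).nullMeasurableSet)
          ⟨0, mf_ne_top f _⟩
      rw [hvol_eq]
      refine le_iInf fun n => ?_
      set l' := max 0 (l0 - 1/(n+1)) with hl'
      have hl'lt : l' < l0 := by
        have : (0:ℝ) < 1/(n+1) := by positivity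
        exact max_lt h0 (by linarith)
      have h1 : mf f l' ≤ mf f (l0 - 1/(n+1)) := mf_anti f (le_max_right _ _)
      refine le_trans ?_ h1
      by_contra hcon
      push_neg at hcon
      have hmem : l' ∈ {l : ℝ | l ∈ Icc (0:ℝ) 1 ∧ mf f l ≤ ENNReal.ofReal s} :=
        ⟨⟨le_max_left _ _, le_trans hl'lt.le hl01⟩, hcon.le⟩
      have := csInf_le (bddBelowS s) hmem
      rw [← dec_set, ← decRearrangement] at this
      exact absurd (lt_of_le_of_lt this hl'lt) (lt_irrefl _)
  -- build A
  have hGfin : volume G ≠ ⊤ := (lt_of_le_of_lt hGvol ENNReal.ofReal_lt_top).ne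
  have hEsub : H \ G ⊆ Icc (0:ℝ) 1 := diff_subset.trans hHsub
  have hrle : ENNReal.ofReal s - volume G ≤ volume (H \ G) := by
    rw [measure_diff hGH hGmeas.nullMeasurableSet hGfin]
    exact tsub_le_tsub_right hHvol _
  obtain ⟨A', hA'sub, hA'meas, hA'vol⟩ := exists_slice (hHmeas.diff hGmeas) hEsub hrle
  refine ⟨G ∪ A', hGmeas.union hA'meas, union_subset (fun x hx => hx.1)
    (hA'sub.trans hEsub), ?_, ?_⟩
  · have hdisj : Disjoint G A' := by
      refine Set.disjoint_left.mpr fun x hxG hxA' => ?_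
      exact (hA'sub hxA').2 hxG
    rw [measure_union hdisj hA'meas, hA'vol, add_tsub_cancel_of_le hGvol]
  · intro l hl
    rcases lt_or_ge l l0 with hcase | hcase
    · have hsubset : G ∪ A' ⊆ {x | l < f x} := by
        intro x hx
        have hxH : x ∈ H := by
          rcases hx with hx | hx
          · exact hGH hx
          · exact (hA'sub hx).1
        exact lt_of_lt_of_le hcase hxH.2
      rw [inter_eq_self_of_subset_left hsubset]
      refine le_trans (min_le_left _ _) ?_
      rw [measure_union (Set.disjoint_left.mpr fun x hxG hxA' => (hA'sub hxA').2 hxG) hA'meas,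
        hA'vol, add_tsub_cancel_of_le hGvol]
    · have hsubset : {x ∈ Icc (0:ℝ) 1 | l < f x} ⊆ (G ∪ A') ∩ {x | l < f x} := by
        intro x hx
        exact ⟨Or.inl ⟨hx.1, lt_of_le_of_lt hcase hx.2⟩, hx.2⟩
      exact le_trans (min_le_right _ _) (measure_mono hsubset)


lemma lint_interval_le {f : ℝ → ℝ} (hfmeas : Measurable f)
    (hf01 : ∀ x ∈ Icc (0:ℝ) 1, f x ∈ Icc (0:ℝ) 1) {s : ℝ} (hs0 : 0 ≤ s) (hs1 : s ≤ 1)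
    {A : Set ℝ} (hA : MeasurableSet A) (hAsub : A ⊆ Icc (0:ℝ) 1)
    (hAprop : ∀ l, 0 < l → min (ENNReal.ofReal s) (mf f l) ≤ volume (A ∩ {x | l < f x})) :
    ∫⁻ t in Icc (0:ℝ) s, ENNReal.ofReal (decRearrangement f t)
      ≤ ∫⁻ x in A, ENNReal.ofReal (f x) := by
  have hganti : Antitone (decRearrangement f) := dec_anti hf01
  have hgmeas : Measurable (decRearrangement f) := hganti.measurable
  rw [lint_layer hgmeas measurableSet_Icc (fun t _ => dec_nonneg hf01 t),
    lint_layer hfmeas hA (fun x hx => (hf01 x (hAsub hx)).1)]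
  refine setLIntegral_mono' measurableSet_Ioi fun l hl => ?_
  have hl' : (0:ℝ) < l := hl
  refine le_trans (le_min ?_ ?_) (hAprop l hl')
  · calc volume (Icc 0 s ∩ {t | l < decRearrangement f t}) ≤ volume (Icc (0:ℝ) s) :=
          measure_mono inter_subset_left
      _ = ENNReal.ofReal s := by rw [Real.volume_Icc, sub_zero]
  · calc volume (Icc 0 s ∩ {t | l < decRearrangement f t})
        ≤ volume {t ∈ Icc (0:ℝ) 1 | l < decRearrangement f t} := by
          refine measure_mono fun t ht => ?_
          exact ⟨⟨ht.1.1, le_trans ht.1.2 hs1⟩, ht.2⟩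
      _ = mf f l := dec_dist hf01 hfmeas hl'

lemma lint_total {f : ℝ → ℝ} (hfmeas : Measurable f)
    (hf01 : ∀ x ∈ Icc (0:ℝ) 1, f x ∈ Icc (0:ℝ) 1) :
    ∫⁻ t in Icc (0:ℝ) 1, ENNReal.ofReal (decRearrangement f t)
      = ∫⁻ x in Icc (0:ℝ) 1, ENNReal.ofReal (f x) := by
  have hganti : Antitone (decRearrangement f) := dec_anti hf01
  rw [lint_layer hganti.measurable measurableSet_Icc (fun t _ => dec_nonneg hf01 t),
    lint_layer hfmeas measurableSet_Icc (fun x hx => (hf01 x hx).1)]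
  refine setLIntegral_congr_fun measurableSet_Ioi
    (fun l hl => ?_)
  have h1 : Icc (0:ℝ) 1 ∩ {t | l < decRearrangement f t}
      = {t ∈ Icc (0:ℝ) 1 | l < decRearrangement f t} := rfl
  have h2 : Icc (0:ℝ) 1 ∩ {x | l < f x} = {x ∈ Icc (0:ℝ) 1 | l < f x} := rfl
  rw [h1, h2, dec_dist hf01 hfmeas hl]
  rfl

end StmtAux10

theorem stmt_10
    (f : ℝ → ℝ) (hfmeas : Measurable f)
    (hf01 : ∀ x ∈ Icc (0:ℝ) 1, f x ∈ Icc (0:ℝ) 1)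
    (hI : CondI f) :
    CondI (decRearrangement f) := by
  have hganti : Antitone (decRearrangement f) := StmtAux10.dec_anti hf01
  have hgmeas : Measurable (decRearrangement f) := hganti.measurable
  have hg0 : ∀ t, 0 ≤ decRearrangement f t := StmtAux10.dec_nonneg hf01
  have hg1 : ∀ t, decRearrangement f t ≤ 1 := StmtAux10.dec_le_one hf01
  intro B hB hBsub
  have hvolIcc := StmtAux10.volIcc
  have hBle : volume B ≤ 1 := hvolIcc ▸ measure_mono hBsub
  have hBne : volume B ≠ ⊤ := (lt_of_le_of_lt hBle ENNReal.one_lt_top).ne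
  set b := (volume B).toReal with hbdef
  have hb0 : 0 ≤ b := ENNReal.toReal_nonneg
  have hb1 : b ≤ 1 := by
    have := ENNReal.toReal_mono (by simp) hBle
    simpa using this
  have hBvol : volume B = ENNReal.ofReal b := (ENNReal.ofReal_toReal hBne).symm
  set s := 1 - b with hsdef
  have hs0 : 0 ≤ s := by simp only [hsdef]; linarith
  have hs1 : s ≤ 1 := by simp only [hsdef]; linarith
  set C := Icc (0:ℝ) 1 \ B with hCdef
  have hCmeas : MeasurableSet C := measurableSet_Icc.diff hB
  have hCsub : C ⊆ Icc (0:ℝ) 1 := diff_subset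
  have hCvol : volume C = ENNReal.ofReal s := by
    rw [hCdef, measure_diff hBsub hB.nullMeasurableSet hBne, hvolIcc, hBvol, hsdef,
      ENNReal.ofReal_sub _ hb0, ENNReal.ofReal_one]
  have hCne : volume C ≠ ⊤ := by rw [hCvol]; exact ENNReal.ofReal_ne_top
  -- f has total integral 1/2
  have hIf : ∫ x in Icc (0:ℝ) 1, f x = 1/2 := by
    have h := (hI _ measurableSet_Icc (subset_refl _)).2 hvolIcc
    rw [h, hvolIcc]
    norm_num
  -- the special set A
  obtain ⟨A, hAmeas, hAsub, hAvol, hAprop⟩ := StmtAux10.exists_good_A hfmeas hf01 hs0 hs1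
  have hAne : volume A ≠ ⊤ := by rw [hAvol]; exact ENNReal.ofReal_ne_top
  -- lintegral chain: ∫⁻_C g ≤ ∫⁻_{[0,s]} g ≤ ∫⁻_A f ≤ 1
  have lC : ∫⁻ t in C, ENNReal.ofReal (decRearrangement f t)
      ≤ ∫⁻ t in Icc 0 s, ENNReal.ofReal (decRearrangement f t) :=
    StmtAux10.lint_le_interval hganti hg0 hCmeas hCsub hs0 hCvol
  have lsA : ∫⁻ t in Icc (0:ℝ) s, ENNReal.ofReal (decRearrangement f t)
      ≤ ∫⁻ x in A, ENNReal.ofReal (f x) :=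
    StmtAux10.lint_interval_le hfmeas hf01 hs0 hs1 hAmeas hAsub hAprop
  have lA1 : ∫⁻ x in A, ENNReal.ofReal (f x) ≤ 1 :=
    StmtAux10.lint_le_one hAmeas (hAvol ▸ ENNReal.ofReal_le_one.mpr hs1)
      (fun x hx => (hf01 x (hAsub hx)).2)
  -- Bochner versions
  have eqC : ∫ t in C, decRearrangement f t
      = (∫⁻ t in C, ENNReal.ofReal (decRearrangement f t)).toReal :=
    StmtAux10.integral_eq_toReal hgmeas hCmeas fun t _ => hg0 t
  have eqA : ∫ x in A, f x = (∫⁻ x in A, ENNReal.ofReal (f x)).toReal :=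
    StmtAux10.integral_eq_toReal hfmeas hAmeas fun x hx => (hf01 x (hAsub hx)).1
  have key1 : ∫ t in C, decRearrangement f t ≤ ∫ x in A, f x := by
    rw [eqC, eqA]
    exact ENNReal.toReal_mono (lt_of_le_of_lt lA1 ENNReal.one_lt_top).ne (lC.trans lsA)
  -- bound ∫_A f from above using CondI on D := [0,1] \ A
  set D := Icc (0:ℝ) 1 \ A with hDdef
  have hDmeas : MeasurableSet D := measurableSet_Icc.diff hAmeas
  have hDsub : D ⊆ Icc (0:ℝ) 1 := diff_subset
  have hDvol : volume D = ENNReal.ofReal b := by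
    rw [hDdef, measure_diff hAsub hAmeas.nullMeasurableSet hAne, hvolIcc, hAvol]
    have : b = 1 - s := by simp only [hsdef]; ring
    rw [this, ENNReal.ofReal_sub _ hs0, ENNReal.ofReal_one]
  have hDtoReal : (volume D).toReal = b := by
    rw [hDvol, ENNReal.toReal_ofReal hb0]
  have hDlb : b ^ 2 / 2 ≤ ∫ x in D, f x := by
    have h := (hI D hDmeas hDsub).1
    rwa [hDtoReal] at h
  have habs : ∀ x ∈ Icc (0:ℝ) 1, |f x| ≤ 1 := fun x hx =>
    abs_le.mpr ⟨by linarith [(hf01 x hx).1], (hf01 x hx).2⟩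
  have intfA : IntegrableOn f A := StmtAux10.integrableOn_of_bounded' hfmeas hAmeas hAne
    fun x hx => habs x (hAsub hx)
  have hDne : volume D ≠ ⊤ := by rw [hDvol]; exact ENNReal.ofReal_ne_top
  have intfD : IntegrableOn f D := StmtAux10.integrableOn_of_bounded' hfmeas hDmeas hDne
    fun x hx => habs x (hDsub hx)
  have hsplitf : ∫ x in Icc (0:ℝ) 1, f x = (∫ x in A, f x) + ∫ x in D, f x := by
    rw [hDdef, ← setIntegral_union disjoint_sdiff_right hDmeas intfA intfD,
      union_diff_cancel hAsub]
  have keyA : ∫ x in A, f x ≤ 1/2 - b ^ 2 / 2 := by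
    rw [hIf] at hsplitf
    linarith
  -- total integral of g
  have eqIccg : ∫ t in Icc (0:ℝ) 1, decRearrangement f t = 1/2 := by
    rw [StmtAux10.integral_eq_toReal hgmeas measurableSet_Icc fun t _ => hg0 t,
      StmtAux10.lint_total hfmeas hf01,
      ← StmtAux10.integral_eq_toReal hfmeas measurableSet_Icc fun x hx => (hf01 x hx).1, hIf]
  -- split g over B, C
  have habsg : ∀ t : ℝ, |decRearrangement f t| ≤ 1 := fun t =>
    abs_le.mpr ⟨by linarith [hg0 t], hg1 t⟩
  have intgB : IntegrableOn (decRearrangement f) B :=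
    StmtAux10.integrableOn_of_bounded' hgmeas hB hBne fun t _ => habsg t
  have intgC : IntegrableOn (decRearrangement f) C :=
    StmtAux10.integrableOn_of_bounded' hgmeas hCmeas hCne fun t _ => habsg t
  have hsplitg : ∫ t in Icc (0:ℝ) 1, decRearrangement f t
      = (∫ t in B, decRearrangement f t) + ∫ t in C, decRearrangement f t := by
    rw [hCdef, ← setIntegral_union disjoint_sdiff_right hCmeas intgB intgC,
      union_diff_cancel hBsub]
  rw [eqIccg] at hsplitg
  constructor
  · -- main inequality
    have : ∫ t in B, decRearrangement f t = 1/2 - ∫ t in C, decRearrangement f t := by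
      linarith
    rw [this]
    have : ∫ t in C, decRearrangement f t ≤ 1/2 - b ^ 2 / 2 := le_trans key1 keyA
    linarith
  · -- equality case
    intro hB1
    have hball : b = 1 := by rw [hbdef, hB1, ENNReal.toReal_one]
    have hCzero : volume C = 0 := by
      rw [hCvol, hsdef, hball]
      norm_num
    have : ∫ t in C, decRearrangement f t = 0 := by
      rw [setIntegral_measure_zero _ hCzero]
    rw [hball]
    norm_num
    linarith
end

section
/- If W is a tournament kernel with ∫₀¹∫₀¹∫₀¹ W(x,y)W(y,z)W(z,x) dx dy dz = 0, then the score function f(x) = ∫₀¹ W(x,y) dy has uniform distribution on [0,1]; i.e., the pushforward of Lebesgue measure under f is Lebesgue measure on [0,1]. Equivalently, ∫₀¹ f(x)² dx = 1/3 and more generally ∫₀¹ f(x)^k dx = 1/(k+1) for all k ≥ 0. -/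
open MeasureTheory Set
open scoped ENNReal

/-- Lebesgue measure restricted to `[0,1]`. -/
noncomputable def mu : Measure ℝ := volume.restrict (Icc (0:ℝ) 1)

instance : IsProbabilityMeasure mu := by
  constructor
  simp [mu, Real.volume_Icc]

lemma mu_ae_mem : ∀ᵐ x ∂mu, x ∈ Icc (0:ℝ) 1 := ae_restrict_mem measurableSet_Icc

-- a bounded a.e.-strongly-measurable function is integrable on a finite measure
lemma bdd_int {α : Type*} [MeasurableSpace α] {ν : Measure α} [IsFiniteMeasure ν]
    {g : α → ℝ} {C : ℝ} (hm : AEStronglyMeasurable g ν) (hb : ∀ᵐ x ∂ν, |g x| ≤ C) :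
    Integrable g ν :=
  (integrable_const C).mono' hm (by simpa using hb)

lemma abs_mul_le_one {a b : ℝ} (ha : a ∈ Icc (0:ℝ) 1) (hb : b ∈ Icc (0:ℝ) 1) :
    |a * b| ≤ 1 := by
  rw [abs_mul]
  calc |a| * |b| ≤ 1 * 1 := by
        apply mul_le_mul <;> simp [abs_le] <;> constructor <;> linarith [ha.1, ha.2, hb.1, hb.2]
  _ = 1 := by ring

lemma ae_comp_fst {α β : Type*} [MeasurableSpace α] [MeasurableSpace β]
    {ν : Measure α} {ρ : Measure β} [SFinite ν] [SFinite ρ] {p : α → Prop}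
    (h : ∀ᵐ x ∂ν, p x) : ∀ᵐ z ∂ν.prod ρ, p z.1 := by
  rw [ae_iff] at h ⊢
  have : {z : α × β | ¬ p z.1} = {x | ¬ p x} ×ˢ (univ : Set β) := by
    ext z; simp
  rw [this, Measure.prod_prod, h, zero_mul]

lemma ae_comp_snd {α β : Type*} [MeasurableSpace α] [MeasurableSpace β]
    {ν : Measure α} {ρ : Measure β} [SFinite ν] [SFinite ρ] {p : β → Prop}
    (h : ∀ᵐ y ∂ρ, p y) : ∀ᵐ z ∂ν.prod ρ, p z.2 := by
  rw [ae_iff] at h ⊢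
  have : {z : α × β | ¬ p z.2} = (univ : Set α) ×ˢ {y | ¬ p y} := by
    ext z; simp
  rw [this, Measure.prod_prod, h, mul_zero]

lemma key_int (W : ℝ → ℝ → ℝ) (hWmeas : Measurable (Function.uncurry W))
    (hW01 : ∀ x ∈ Icc (0:ℝ) 1, ∀ y ∈ Icc (0:ℝ) 1, W x y ∈ Icc (0:ℝ) 1)
    (ν : Measure ℝ) [IsFiniteMeasure ν]
    (hE : ∀ᵐ x ∂ν, x ∈ Icc (0:ℝ) 1)
    (h6 : ∀ᵐ q ∂ν.prod (ν.prod ν),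
      W q.1 q.2.1 * W q.1 q.2.2 + W q.2.1 q.1 * W q.2.1 q.2.2
        + W q.2.2 q.1 * W q.2.2 q.2.1 = 1) :
    3 * ∫ x, (∫ y, W x y ∂ν) ^ 2 ∂ν = (ν univ).toReal ^ 3 := by
  set r : ℝ → ℝ := fun x => ∫ y, W x y ∂ν with hr
  set m : ℝ := (ν univ).toReal with hm
  have hWsm : StronglyMeasurable (Function.uncurry W) := hWmeas.stronglyMeasurable
  have hrm : StronglyMeasurable r := hWsm.integral_prod_right'
  -- measurability of the three summands
  have c1 : Measurable fun q : ℝ × ℝ × ℝ => q.1 := measurable_fst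
  have c2 : Measurable fun q : ℝ × ℝ × ℝ => q.2.1 := measurable_fst.comp measurable_snd
  have c3 : Measurable fun q : ℝ × ℝ × ℝ => q.2.2 := measurable_snd.comp measurable_snd
  have mW : ∀ {u v : ℝ × ℝ × ℝ → ℝ}, Measurable u → Measurable v →
      Measurable (fun q => W (u q) (v q)) := fun hu hv => hWmeas.comp (hu.prodMk hv)
  -- a.e. membership of coordinates
  have hq1 : ∀ᵐ q ∂ν.prod (ν.prod ν), q.1 ∈ Icc (0:ℝ) 1 := ae_comp_fst hE
  have hq2 : ∀ᵐ q ∂ν.prod (ν.prod ν), q.2.1 ∈ Icc (0:ℝ) 1 :=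
    ae_comp_snd (ae_comp_fst hE)
  have hq3 : ∀ᵐ q ∂ν.prod (ν.prod ν), q.2.2 ∈ Icc (0:ℝ) 1 :=
    ae_comp_snd (ae_comp_snd hE)
  -- integrability of the three summands
  have i1 : Integrable (fun q : ℝ × ℝ × ℝ => W q.1 q.2.1 * W q.1 q.2.2) (ν.prod (ν.prod ν)) := by
    refine bdd_int (C := 1) ((mW c1 c2).mul (mW c1 c3)).aestronglyMeasurable ?_
    filter_upwards [hq1, hq2, hq3] with q h1 h2 h3
    exact abs_mul_le_one (hW01 _ h1 _ h2) (hW01 _ h1 _ h3)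
  have i2 : Integrable (fun q : ℝ × ℝ × ℝ => W q.2.1 q.1 * W q.2.1 q.2.2) (ν.prod (ν.prod ν)) := by
    refine bdd_int (C := 1) ((mW c2 c1).mul (mW c2 c3)).aestronglyMeasurable ?_
    filter_upwards [hq1, hq2, hq3] with q h1 h2 h3
    exact abs_mul_le_one (hW01 _ h2 _ h1) (hW01 _ h2 _ h3)
  have i3 : Integrable (fun q : ℝ × ℝ × ℝ => W q.2.2 q.1 * W q.2.2 q.2.1) (ν.prod (ν.prod ν)) := by
    refine bdd_int (C := 1) ((mW c3 c1).mul (mW c3 c2)).aestronglyMeasurable ?_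
    filter_upwards [hq1, hq2, hq3] with q h1 h2 h3
    exact abs_mul_le_one (hW01 _ h3 _ h1) (hW01 _ h3 _ h2)
  -- bound on r
  have hm0 : 0 ≤ m := ENNReal.toReal_nonneg
  have hrb : ∀ᵐ x ∂ν, |r x| ≤ m := by
    filter_upwards [hE] with x hx
    have : ‖∫ y, W x y ∂ν‖ ≤ 1 * (ν univ).toReal := by
      refine norm_integral_le_of_norm_le_const ?_
      filter_upwards [hE] with y hy
      rw [Real.norm_eq_abs, abs_le]
      have := hW01 _ hx _ hy
      exact ⟨by linarith [this.1], this.2⟩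
    simpa [hr] using this
  -- total mass of the triple product
  have hmass : ((ν.prod (ν.prod ν)) univ).toReal = m ^ 3 := by
    rw [← univ_prod_univ, Measure.prod_prod, ← univ_prod_univ, Measure.prod_prod,
      ENNReal.toReal_mul, ENNReal.toReal_mul]
    ring
  -- the sum integrates to m^3
  have hA : ∫ q, (W q.1 q.2.1 * W q.1 q.2.2 + W q.2.1 q.1 * W q.2.1 q.2.2
      + W q.2.2 q.1 * W q.2.2 q.2.1) ∂(ν.prod (ν.prod ν)) = m ^ 3 := by
    rw [integral_congr_ae (h6.mono fun q hq => hq), integral_const, smul_eq_mul, mul_one, measureReal_def, hmass]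
  -- first term
  have e1 : ∫ q, (W q.1 q.2.1 * W q.1 q.2.2) ∂(ν.prod (ν.prod ν)) = ∫ x, r x ^ 2 ∂ν := by
    rw [integral_prod _ i1]
    refine integral_congr_ae (Filter.Eventually.of_forall fun x => ?_)
    show (∫ z : ℝ × ℝ, W x z.1 * W x z.2 ∂ν.prod ν) = r x ^ 2
    rw [integral_prod_mul, sq]
  -- second term
  have iR2 : Integrable (fun p : ℝ × ℝ => r p.1 * W p.1 p.2) (ν.prod ν) := by
    refine bdd_int (C := m) (((hrm.measurable.comp measurable_fst).mul hWmeas).aestronglyMeasurable) ?_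
    filter_upwards [ae_comp_fst (ρ := ν) hrb, ae_comp_fst (ρ := ν) hE, ae_comp_snd (ν := ν) hE]
      with p h1 h2 h3
    rw [abs_mul]
    have h4 := hW01 _ h2 _ h3
    calc |r p.1| * |W p.1 p.2| ≤ m * 1 := by
          apply mul_le_mul h1 _ (abs_nonneg _) hm0
          rw [abs_le]; exact ⟨by linarith [h4.1], h4.2⟩
    _ = m := mul_one m
  have e2 : ∫ q, (W q.2.1 q.1 * W q.2.1 q.2.2) ∂(ν.prod (ν.prod ν)) = ∫ x, r x ^ 2 ∂ν := by
    rw [integral_prod_symm _ i2]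
    have step1 : ∀ p : ℝ × ℝ, (∫ x, W p.1 x * W p.1 p.2 ∂ν) = r p.1 * W p.1 p.2 := by
      intro p
      have : (∫ x, W p.1 x * W p.1 p.2 ∂ν) = (∫ x, W p.1 x ∂ν) * W p.1 p.2 :=
        integral_mul_const _ _
      rw [this]
    calc ∫ (p : ℝ × ℝ), ∫ x, W (x, p).2.1 (x, p).1 * W (x, p).2.1 (x, p).2.2 ∂ν ∂ν.prod ν
        = ∫ p : ℝ × ℝ, r p.1 * W p.1 p.2 ∂ν.prod ν := by
          refine integral_congr_ae (Filter.Eventually.of_forall fun p => ?_)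
          exact step1 p
    _ = ∫ y, ∫ z, r y * W y z ∂ν ∂ν := integral_prod _ iR2
    _ = ∫ x, r x ^ 2 ∂ν := by
          refine integral_congr_ae (Filter.Eventually.of_forall fun y => ?_)
          show (∫ z, r y * W y z ∂ν) = r y ^ 2
          rw [integral_const_mul, sq]
  -- third term
  have iR3 : Integrable (fun p : ℝ × ℝ => r p.2 * W p.2 p.1) (ν.prod ν) := by
    refine bdd_int (C := m) (((hrm.measurable.comp measurable_snd).mul
      (hWmeas.comp (measurable_snd.prodMk measurable_fst))).aestronglyMeasurable) ?_
    filter_upwards [ae_comp_snd (ν := ν) hrb, ae_comp_fst (ρ := ν) hE, ae_comp_snd (ν := ν) hE]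
      with p h1 h2 h3
    rw [abs_mul]
    have h4 := hW01 _ h3 _ h2
    calc |r p.2| * |W p.2 p.1| ≤ m * 1 := by
          apply mul_le_mul h1 _ (abs_nonneg _) hm0
          rw [abs_le]; exact ⟨by linarith [h4.1], h4.2⟩
    _ = m := mul_one m
  have e3 : ∫ q, (W q.2.2 q.1 * W q.2.2 q.2.1) ∂(ν.prod (ν.prod ν)) = ∫ x, r x ^ 2 ∂ν := by
    rw [integral_prod_symm _ i3]
    calc ∫ (p : ℝ × ℝ), ∫ x, W (x, p).2.2 (x, p).1 * W (x, p).2.2 (x, p).2.1 ∂ν ∂ν.prod ν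
        = ∫ p : ℝ × ℝ, r p.2 * W p.2 p.1 ∂ν.prod ν := by
          refine integral_congr_ae (Filter.Eventually.of_forall fun p => ?_)
          show (∫ x, W p.2 x * W p.2 p.1 ∂ν) = r p.2 * W p.2 p.1
          exact integral_mul_const _ _
    _ = ∫ z, ∫ y, r z * W z y ∂ν ∂ν := integral_prod_symm _ iR3
    _ = ∫ x, r x ^ 2 ∂ν := by
          refine integral_congr_ae (Filter.Eventually.of_forall fun z => ?_)
          show (∫ y, r z * W z y ∂ν) = r z ^ 2
          rw [integral_const_mul, sq]
  have hsplit : ∫ q, (W q.1 q.2.1 * W q.1 q.2.2 + W q.2.1 q.1 * W q.2.1 q.2.2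
      + W q.2.2 q.1 * W q.2.2 q.2.1) ∂(ν.prod (ν.prod ν))
      = (∫ q, (W q.1 q.2.1 * W q.1 q.2.2) ∂(ν.prod (ν.prod ν)))
        + (∫ q, (W q.2.1 q.1 * W q.2.1 q.2.2) ∂(ν.prod (ν.prod ν)))
        + (∫ q, (W q.2.2 q.1 * W q.2.2 q.2.1) ∂(ν.prod (ν.prod ν))) := by
    have h123 := integral_add (μ := ν.prod (ν.prod ν)) (i1.add i2) i3
    have h12 := integral_add (μ := ν.prod (ν.prod ν)) i1 i2
    simp only [Pi.add_apply] at h123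
    rw [h123, h12]
  rw [hsplit, e1, e2, e3] at hA
  linarith [hA]

section pieces
variable {W : ℝ → ℝ → ℝ}

lemma cyc_zero (hWmeas : Measurable (Function.uncurry W))
    (hW01 : ∀ x ∈ Icc (0:ℝ) 1, ∀ y ∈ Icc (0:ℝ) 1, W x y ∈ Icc (0:ℝ) 1)
    (hC3 : ∫ x, ∫ y, ∫ z, W x y * W y z * W z x ∂mu ∂mu ∂mu = 0) :
    ∀ᵐ q ∂mu.prod (mu.prod mu), W q.1 q.2.1 * W q.2.1 q.2.2 * W q.2.2 q.1 = 0 := by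
  have c1 : Measurable fun q : ℝ × ℝ × ℝ => q.1 := measurable_fst
  have c2 : Measurable fun q : ℝ × ℝ × ℝ => q.2.1 := measurable_fst.comp measurable_snd
  have c3 : Measurable fun q : ℝ × ℝ × ℝ => q.2.2 := measurable_snd.comp measurable_snd
  have mW : ∀ {u v : ℝ × ℝ × ℝ → ℝ}, Measurable u → Measurable v →
      Measurable (fun q => W (u q) (v q)) := fun hu hv => hWmeas.comp (hu.prodMk hv)
  have hq1 : ∀ᵐ q ∂mu.prod (mu.prod mu), q.1 ∈ Icc (0:ℝ) 1 := ae_comp_fst mu_ae_mem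
  have hq2 : ∀ᵐ q ∂mu.prod (mu.prod mu), q.2.1 ∈ Icc (0:ℝ) 1 :=
    ae_comp_snd (ae_comp_fst mu_ae_mem)
  have hq3 : ∀ᵐ q ∂mu.prod (mu.prod mu), q.2.2 ∈ Icc (0:ℝ) 1 :=
    ae_comp_snd (ae_comp_snd mu_ae_mem)
  have i0 : Integrable (fun q : ℝ × ℝ × ℝ => W q.1 q.2.1 * W q.2.1 q.2.2 * W q.2.2 q.1)
      (mu.prod (mu.prod mu)) := by
    refine bdd_int (C := 1) (((mW c1 c2).mul (mW c2 c3)).mul (mW c3 c1)).aestronglyMeasurable ?_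
    filter_upwards [hq1, hq2, hq3] with q h1 h2 h3
    rw [abs_mul]
    calc |W q.1 q.2.1 * W q.2.1 q.2.2| * |W q.2.2 q.1| ≤ 1 * 1 := by
          apply mul_le_mul (abs_mul_le_one (hW01 _ h1 _ h2) (hW01 _ h2 _ h3)) _
            (abs_nonneg _) zero_le_one
          have := hW01 _ h3 _ h1
          rw [abs_le]; exact ⟨by linarith [this.1], this.2⟩
    _ = 1 := by ring
  have hnn : 0 ≤ᵐ[mu.prod (mu.prod mu)]
      fun q : ℝ × ℝ × ℝ => W q.1 q.2.1 * W q.2.1 q.2.2 * W q.2.2 q.1 := by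
    filter_upwards [hq1, hq2, hq3] with q h1 h2 h3
    exact mul_nonneg (mul_nonneg (hW01 _ h1 _ h2).1 (hW01 _ h2 _ h3).1) (hW01 _ h3 _ h1).1
  have hint : ∫ q, (W q.1 q.2.1 * W q.2.1 q.2.2 * W q.2.2 q.1) ∂mu.prod (mu.prod mu) = 0 := by
    rw [integral_prod _ i0]
    rw [← hC3]
    refine integral_congr_ae ?_
    filter_upwards [i0.prod_right_ae] with x hx
    exact integral_prod _ hx
  exact (integral_eq_zero_iff_of_nonneg_ae hnn i0).mp hint

lemma cyc_zero_swap (hWmeas : Measurable (Function.uncurry W))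
    (h : ∀ᵐ q ∂mu.prod (mu.prod mu), W q.1 q.2.1 * W q.2.1 q.2.2 * W q.2.2 q.1 = 0) :
    ∀ᵐ q ∂mu.prod (mu.prod mu), W q.1 q.2.2 * W q.2.2 q.2.1 * W q.2.1 q.1 = 0 := by
  have hT : Measurable fun q : ℝ × ℝ × ℝ => (q.1, (q.2.2, q.2.1)) :=
    measurable_fst.prodMk ((measurable_snd.comp measurable_snd).prodMk
      (measurable_fst.comp measurable_snd))
  have hmap : Measure.map (fun q : ℝ × ℝ × ℝ => (q.1, (q.2.2, q.2.1))) (mu.prod (mu.prod mu))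
      = mu.prod (mu.prod mu) := by
    have : (fun q : ℝ × ℝ × ℝ => (q.1, (q.2.2, q.2.1))) = Prod.map id Prod.swap := rfl
    rw [this, ← Measure.map_prod_map _ _ measurable_id measurable_swap,
      Measure.map_id, Measure.prod_swap]
  have := ae_of_ae_map (hT.aemeasurable)
    (p := fun q : ℝ × ℝ × ℝ => W q.1 q.2.1 * W q.2.1 q.2.2 * W q.2.2 q.1 = 0)
    (by rw [hmap]; exact h)
  filter_upwards [this] with q hq
  exact hq

lemma sum_pairs (hWsum : ∀ᵐ p ∂(mu.prod mu), W p.1 p.2 + W p.2 p.1 = 1) :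
    ∀ᵐ q ∂mu.prod (mu.prod mu),
      (W q.1 q.2.1 + W q.2.1 q.1 = 1) ∧ (W q.2.1 q.2.2 + W q.2.2 q.2.1 = 1)
        ∧ (W q.1 q.2.2 + W q.2.2 q.1 = 1) := by
  have hP : ∀ (g : ℝ × ℝ × ℝ → ℝ × ℝ), Measurable g →
      Measure.map g (mu.prod (mu.prod mu)) = mu.prod mu →
      ∀ᵐ q ∂mu.prod (mu.prod mu), W (g q).1 (g q).2 + W (g q).2 (g q).1 = 1 := by
    intro g hg hmap
    exact ae_of_ae_map hg.aemeasurable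
      (p := fun p : ℝ × ℝ => W p.1 p.2 + W p.2 p.1 = 1) (by rw [hmap]; exact hWsum)
  have h12 := hP (fun q => (q.1, q.2.1))
    (measurable_fst.prodMk (measurable_fst.comp measurable_snd))
    (by
      have : (fun q : ℝ × ℝ × ℝ => (q.1, q.2.1)) = Prod.map id Prod.fst := rfl
      rw [this, ← Measure.map_prod_map _ _ measurable_id measurable_fst,
        Measure.map_id, Measure.map_fst_prod]
      simp)
  have h23 := hP (fun q => q.2) measurable_snd
    (by rw [Measure.map_snd_prod]; simp)
  have h13 := hP (fun q => (q.1, q.2.2))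
    (measurable_fst.prodMk (measurable_snd.comp measurable_snd))
    (by
      have : (fun q : ℝ × ℝ × ℝ => (q.1, q.2.2)) = Prod.map id Prod.snd := rfl
      rw [this, ← Measure.map_prod_map _ _ measurable_id measurable_snd,
        Measure.map_id, Measure.map_snd_prod]
      simp)
  filter_upwards [h12, h23, h13] with q a b c
  exact ⟨a, b, c⟩

lemma six_sum (hWmeas : Measurable (Function.uncurry W))
    (hW01 : ∀ x ∈ Icc (0:ℝ) 1, ∀ y ∈ Icc (0:ℝ) 1, W x y ∈ Icc (0:ℝ) 1)
    (hWsum : ∀ᵐ p ∂(mu.prod mu), W p.1 p.2 + W p.2 p.1 = 1)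
    (hC3 : ∫ x, ∫ y, ∫ z, W x y * W y z * W z x ∂mu ∂mu ∂mu = 0) :
    ∀ᵐ q ∂mu.prod (mu.prod mu),
      W q.1 q.2.1 * W q.1 q.2.2 + W q.2.1 q.1 * W q.2.1 q.2.2
        + W q.2.2 q.1 * W q.2.2 q.2.1 = 1 := by
  have h0 := cyc_zero hWmeas hW01 hC3
  have h0' := cyc_zero_swap hWmeas h0
  filter_upwards [h0, h0', sum_pairs hWsum] with q hz hz' hs
  obtain ⟨e1, e2, e3⟩ := hs
  have ea : W q.2.1 q.1 = 1 - W q.1 q.2.1 := by linarith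
  have eb : W q.2.2 q.2.1 = 1 - W q.2.1 q.2.2 := by linarith
  have ec : W q.2.2 q.1 = 1 - W q.1 q.2.2 := by linarith
  rw [ec] at hz
  rw [eb, ea] at hz'
  rw [ea, eb, ec]
  linear_combination - hz - hz'

end pieces

section pieces2
variable {W : ℝ → ℝ → ℝ} {f : ℝ → ℝ}

lemma score_compare (hWmeas : Measurable (Function.uncurry W))
    (hW01 : ∀ x ∈ Icc (0:ℝ) 1, ∀ y ∈ Icc (0:ℝ) 1, W x y ∈ Icc (0:ℝ) 1)
    (hWsum : ∀ᵐ p ∂(mu.prod mu), W p.1 p.2 + W p.2 p.1 = 1)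
    (hf : ∀ x, f x = ∫ y, W x y ∂mu)
    (h0 : ∀ᵐ q ∂mu.prod (mu.prod mu), W q.1 q.2.1 * W q.2.1 q.2.2 * W q.2.2 q.1 = 0)
    (h0' : ∀ᵐ q ∂mu.prod (mu.prod mu), W q.1 q.2.2 * W q.2.2 q.2.1 * W q.2.1 q.1 = 0) :
    ∀ᵐ x ∂mu, ∀ᵐ y ∂mu,
      (f y < f x → W x y = 1 ∧ W y x = 0) ∧ (f x < f y → W x y = 0 ∧ W y x = 1) := by
  have intW : ∀ x : ℝ, x ∈ Icc (0:ℝ) 1 → Integrable (fun z => W x z) mu := by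
    intro x hx
    refine bdd_int (C := 1) (hWmeas.of_uncurry_left).aestronglyMeasurable ?_
    filter_upwards [mu_ae_mem] with z hz
    have := hW01 _ hx _ hz
    rw [abs_le]; exact ⟨by linarith [this.1], this.2⟩
  have intW' : ∀ y : ℝ, y ∈ Icc (0:ℝ) 1 → Integrable (fun z => W z y) mu := by
    intro y hy
    refine bdd_int (C := 1) (hWmeas.of_uncurry_right).aestronglyMeasurable ?_
    filter_upwards [mu_ae_mem] with z hz
    have := hW01 _ hz _ hy
    rw [abs_le]; exact ⟨by linarith [this.1], this.2⟩
  -- the key one-sided comparison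
  have key : ∀ x y : ℝ, x ∈ Icc (0:ℝ) 1 → y ∈ Icc (0:ℝ) 1 →
      (∀ᵐ z ∂mu, W x z * W z y * W y x = 0) →
      (∀ᵐ z ∂mu, W y z + W z y = 1) →
      0 < W y x → f x ≤ f y := by
    intro x y hx hy hz hsy hpos
    have hle : ∀ᵐ z ∂mu, W x z + W z y ≤ (1:ℝ) := by
      filter_upwards [hz, mu_ae_mem] with z h0 hzI
      have hprod : W x z * W z y = 0 := by
        rcases mul_eq_zero.mp h0 with h | h
        · exact h
        · exact absurd h hpos.ne'
      rcases mul_eq_zero.mp hprod with h | h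
      · rw [h]; have := (hW01 _ hzI _ hy).2; linarith
      · rw [h]; have := (hW01 _ hx _ hzI).2; linarith
    have hmono := integral_mono_ae ((intW x hx).add (intW' y hy)) (integrable_const 1) hle
    simp only [Pi.add_apply] at hmono
    rw [integral_add (intW x hx) (intW' y hy), integral_const] at hmono
    simp only [measure_univ, probReal_univ, smul_eq_mul, one_mul] at hmono
    have h2 : ∫ z, W z y ∂mu = 1 - f y := by
      have e : ∀ᵐ z ∂mu, W z y = 1 - W y z := by
        filter_upwards [hsy] with z h; linarith
      rw [integral_congr_ae e, integral_sub (integrable_const 1) (intW y hy), integral_const]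
      simp only [measure_univ, probReal_univ, smul_eq_mul, one_mul]
      rw [hf y]
    rw [h2, ← hf x] at hmono
    linarith
  -- the sliced cyclic-vanishing statements
  have h3b : ∀ᵐ q ∂mu.prod (mu.prod mu), W q.2.1 q.2.2 * W q.2.2 q.1 * W q.1 q.2.1 = 0 := by
    filter_upwards [h0] with q hq; linear_combination hq
  have s3a : ∀ᵐ x ∂mu, ∀ᵐ y ∂mu, ∀ᵐ z ∂mu, W x z * W z y * W y x = 0 := by
    filter_upwards [Measure.ae_ae_of_ae_prod h0'] with x hx using Measure.ae_ae_of_ae_prod hx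
  have s3b : ∀ᵐ x ∂mu, ∀ᵐ y ∂mu, ∀ᵐ z ∂mu, W y z * W z x * W x y = 0 := by
    filter_upwards [Measure.ae_ae_of_ae_prod h3b] with x hx using Measure.ae_ae_of_ae_prod hx
  have hsum_slice : ∀ᵐ a ∂mu, ∀ᵐ b ∂mu, W a b + W b a = 1 := Measure.ae_ae_of_ae_prod hWsum
  filter_upwards [s3a, s3b, hsum_slice, mu_ae_mem] with x ha hb hsx hxI
  filter_upwards [ha, hb, hsum_slice, hsx, mu_ae_mem] with y hay hby hsy hxy hyI
  constructor
  · intro hlt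
    have hWyx : W y x = 0 := by
      by_contra hne
      have hpos : 0 < W y x := lt_of_le_of_ne (hW01 _ hyI _ hxI).1 (Ne.symm hne)
      exact absurd (key x y hxI hyI hay hsy hpos) (not_le.mpr hlt)
    exact ⟨by linarith, hWyx⟩
  · intro hlt
    have hWxy : W x y = 0 := by
      by_contra hne
      have hpos : 0 < W x y := lt_of_le_of_ne (hW01 _ hxI _ hyI).1 (Ne.symm hne)
      exact absurd (key y x hyI hxI hby hsx hpos) (not_le.mpr hlt)
    exact ⟨hWxy, by linarith⟩

end pieces2

section pieces3
variable {W : ℝ → ℝ → ℝ} {f : ℝ → ℝ}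

lemma no_atom (hWmeas : Measurable (Function.uncurry W))
    (hW01 : ∀ x ∈ Icc (0:ℝ) 1, ∀ y ∈ Icc (0:ℝ) 1, W x y ∈ Icc (0:ℝ) 1)
    (hWsum : ∀ᵐ p ∂(mu.prod mu), W p.1 p.2 + W p.2 p.1 = 1)
    (hf : ∀ x, f x = ∫ y, W x y ∂mu) (hfm : Measurable f)
    (hK : ∀ᵐ x ∂mu, ∀ᵐ y ∂mu,
      (f y < f x → W x y = 1 ∧ W y x = 0) ∧ (f x < f y → W x y = 0 ∧ W y x = 1))
    (h6 : ∀ᵐ q ∂mu.prod (mu.prod mu),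
      W q.1 q.2.1 * W q.1 q.2.2 + W q.2.1 q.1 * W q.2.1 q.2.2
        + W q.2.2 q.1 * W q.2.2 q.2.1 = 1)
    (s : ℝ) : mu {x | f x = s} = 0 := by
  by_contra hS0
  set S : Set ℝ := {x | f x = s} with hSdef
  have hSmeas : MeasurableSet S := hfm (measurableSet_singleton s)
  set ν : Measure ℝ := mu.restrict S with hν
  have : IsFiniteMeasure ν := by
    constructor
    rw [hν, Measure.restrict_apply_univ]
    exact lt_of_le_of_lt (measure_mono (subset_univ _)) (by simp [measure_univ])
  obtain ⟨m, hmdef⟩ : ∃ m : ℝ, m = (ν univ).toReal := ⟨_, rfl⟩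
  have hmuS : ν univ = mu S := by rw [hν, Measure.restrict_apply_univ]
  have hmpos : 0 < m := by
    rw [hmdef, hmuS]
    exact ENNReal.toReal_pos hS0 (measure_ne_top mu S)
  have hE : ∀ᵐ x ∂ν, x ∈ Icc (0:ℝ) 1 := ae_restrict_of_ae mu_ae_mem
  have hac : ν ≪ mu := Measure.absolutelyContinuous_of_le Measure.restrict_le_self
  have hac2 : ν.prod ν ≪ mu.prod mu := hac.prod hac
  have hac3 : ν.prod (ν.prod ν) ≪ mu.prod (mu.prod mu) := hac.prod (hac.prod hac)
  have h6ν := hac3.ae_le h6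
  have hKint := key_int W hWmeas hW01 ν hE h6ν
  set r : ℝ → ℝ := fun x => ∫ y, W x y ∂ν with hrdef
  -- r is a.e. constant equal to s - mu {f < s}
  obtain ⟨c, hcdef⟩ : ∃ c : ℝ, c = s - (mu {y | f y < s}).toReal := ⟨_, rfl⟩
  have hAmeas : MeasurableSet {y | f y < s} := hfm measurableSet_Iio
  have hCmeas : MeasurableSet {y | s < f y} := hfm measurableSet_Ioi
  have hrc : ∀ᵐ x ∂ν, r x = c := by
    have h1 : ∀ᵐ x ∂ν, x ∈ Icc (0:ℝ) 1 := hE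
    have h2 : ∀ᵐ x ∂ν, f x = s := ae_restrict_mem hSmeas
    have h3 : ∀ᵐ x ∂ν, ∀ᵐ y ∂mu,
        (f y < f x → W x y = 1 ∧ W y x = 0) ∧ (f x < f y → W x y = 0 ∧ W y x = 1) :=
      ae_restrict_of_ae hK
    filter_upwards [h1, h2, h3] with x hxI hxs hxK
    have intx : Integrable (fun y => W x y) mu := by
      refine bdd_int (C := 1) (hWmeas.of_uncurry_left).aestronglyMeasurable ?_
      filter_upwards [mu_ae_mem] with z hz
      have := hW01 _ hxI _ hz
      rw [abs_le]; exact ⟨by linarith [this.1], this.2⟩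
    -- split the integral
    have hsplit1 : ∫ y, W x y ∂mu
        = (∫ y in {y | f y < s}, W x y ∂mu) + ∫ y in {y | f y < s}ᶜ, W x y ∂mu :=
      (integral_add_compl hAmeas intx).symm
    have hcompl : {y | f y < s}ᶜ = S ∪ {y | s < f y} := by
      ext y
      simp only [mem_compl_iff, mem_setOf_eq, not_lt, mem_union, hSdef]
      constructor
      · intro h
        rcases eq_or_lt_of_le h with h' | h'
        · exact Or.inl h'.symm
        · exact Or.inr h'
      · intro h
        rcases h with h | h
        · exact le_of_eq h.symm
        · exact le_of_lt h
    have hdisj : Disjoint S {y | s < f y} := by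
      rw [disjoint_left]
      intro y hy hy'
      rw [hSdef, mem_setOf_eq] at hy
      rw [mem_setOf_eq] at hy'
      exact absurd hy (ne_of_gt hy')
    have hsplit2 : ∫ y in {y | f y < s}ᶜ, W x y ∂mu
        = (∫ y in S, W x y ∂mu) + ∫ y in {y | s < f y}, W x y ∂mu := by
      rw [hcompl]
      exact setIntegral_union hdisj hCmeas intx.integrableOn intx.integrableOn
    -- evaluate the three pieces
    have hev1 : ∫ y in {y | f y < s}, W x y ∂mu = (mu {y | f y < s}).toReal := by
      have : ∀ᵐ y ∂mu.restrict {y | f y < s}, W x y = 1 := by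
        filter_upwards [ae_restrict_of_ae hxK, ae_restrict_mem hAmeas] with y hy hy'
        exact (hy.1 (by rw [hxs]; exact hy')).1
      rw [integral_congr_ae this, setIntegral_const, smul_eq_mul, mul_one, measureReal_def]
    have hev3 : ∫ y in {y | s < f y}, W x y ∂mu = 0 := by
      have : ∀ᵐ y ∂mu.restrict {y | s < f y}, W x y = 0 := by
        filter_upwards [ae_restrict_of_ae hxK, ae_restrict_mem hCmeas] with y hy hy'
        exact (hy.2 (by rw [hxs]; exact hy')).1
      rw [integral_congr_ae this]
      simp
    have : f x = (mu {y | f y < s}).toReal + r x := by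
      rw [hf x, hsplit1, hsplit2, hev1, hev3, hrdef, hν]
      ring_nf
    rw [hxs] at this
    rw [hcdef]
    linarith
  -- the mean of r over ν is m^2/2
  have iW2 : Integrable (fun p : ℝ × ℝ => W p.1 p.2) (ν.prod ν) := by
    refine bdd_int (C := 1) hWmeas.aestronglyMeasurable ?_
    filter_upwards [ae_comp_fst (ρ := ν) hE, ae_comp_snd (ν := ν) hE] with p h1 h2
    have := hW01 _ h1 _ h2
    rw [abs_le]; exact ⟨by linarith [this.1], this.2⟩
  have iW2' : Integrable (fun p : ℝ × ℝ => W p.2 p.1) (ν.prod ν) := by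
    refine bdd_int (C := 1)
      (hWmeas.comp (measurable_snd.prodMk measurable_fst)).aestronglyMeasurable ?_
    filter_upwards [ae_comp_fst (ρ := ν) hE, ae_comp_snd (ν := ν) hE] with p h1 h2
    have := hW01 _ h2 _ h1
    rw [abs_le]; exact ⟨by linarith [this.1], this.2⟩
  have hswap : ∫ p : ℝ × ℝ, W p.2 p.1 ∂ν.prod ν = ∫ p : ℝ × ℝ, W p.1 p.2 ∂ν.prod ν := by
    have := integral_prod_swap (μ := ν) (ν := ν) (fun p : ℝ × ℝ => W p.1 p.2)
    exact this
  have hsum2 : ∫ p : ℝ × ℝ, (W p.1 p.2 + W p.2 p.1) ∂ν.prod ν = m ^ 2 := by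
    have hae : ∀ᵐ p ∂ν.prod ν, W p.1 p.2 + W p.2 p.1 = 1 := hac2.ae_le hWsum
    rw [integral_congr_ae (hae.mono fun p hp => hp), integral_const, smul_eq_mul, mul_one, measureReal_def,
      ← univ_prod_univ, Measure.prod_prod, ENNReal.toReal_mul]
    rw [← hmdef]; ring
  have hmean : c * m = m ^ 2 / 2 := by
    have e1 : ∫ x, r x ∂ν = ∫ p : ℝ × ℝ, W p.1 p.2 ∂ν.prod ν := (integral_prod _ iW2).symm
    have e2 : ∫ x, r x ∂ν = c * m := by
      rw [integral_congr_ae hrc, integral_const, smul_eq_mul, measureReal_def]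
      rw [← hmdef]; ring
    have e3 : ∫ p : ℝ × ℝ, (W p.1 p.2 + W p.2 p.1) ∂ν.prod ν
        = (∫ p : ℝ × ℝ, W p.1 p.2 ∂ν.prod ν) + ∫ p : ℝ × ℝ, W p.2 p.1 ∂ν.prod ν :=
      integral_add iW2 iW2'
    rw [hsum2, hswap] at e3
    rw [e2] at e1
    linear_combination e1 - e3 / 2
  -- the second moment of r
  have hsq : ∫ x, r x ^ 2 ∂ν = c ^ 2 * m := by
    have : ∀ᵐ x ∂ν, r x ^ 2 = c ^ 2 := by
      filter_upwards [hrc] with x hx; rw [hx]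
    rw [integral_congr_ae this, integral_const, smul_eq_mul, measureReal_def]
    rw [← hmdef]; ring
  -- 3 c^2 m = m^3 and c m = m^2/2 with m > 0 gives contradiction
  have hc : c = m / 2 := mul_right_cancel₀ (ne_of_gt hmpos) (by linear_combination hmean)
  rw [hc] at hsq
  rw [hsq, ← hmdef] at hKint
  nlinarith [hKint, pow_pos hmpos 3]

end pieces3

section pieces4
variable {W : ℝ → ℝ → ℝ} {f : ℝ → ℝ}

lemma f_meas (hWmeas : Measurable (Function.uncurry W))
    (hf : ∀ x, f x = ∫ y, W x y ∂mu) : Measurable f := by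
  have : f = fun x => ∫ y, W x y ∂mu := funext hf
  rw [this]
  exact (hWmeas.stronglyMeasurable.integral_prod_right' (ν := mu)).measurable

lemma f_bdd (hWmeas : Measurable (Function.uncurry W))
    (hW01 : ∀ x ∈ Icc (0:ℝ) 1, ∀ y ∈ Icc (0:ℝ) 1, W x y ∈ Icc (0:ℝ) 1)
    (hf : ∀ x, f x = ∫ y, W x y ∂mu) :
    ∀ x ∈ Icc (0:ℝ) 1, f x ∈ Icc (0:ℝ) 1 := by
  intro x hx
  have intx : Integrable (fun y => W x y) mu := by
    refine bdd_int (C := 1) (hWmeas.of_uncurry_left).aestronglyMeasurable ?_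
    filter_upwards [mu_ae_mem] with z hz
    have := hW01 _ hx _ hz
    rw [abs_le]; exact ⟨by linarith [this.1], this.2⟩
  constructor
  · rw [hf x]
    refine integral_nonneg_of_ae ?_
    filter_upwards [mu_ae_mem] with z hz
    exact (hW01 _ hx _ hz).1
  · rw [hf x]
    have := integral_mono_ae intx (integrable_const 1)
      (by filter_upwards [mu_ae_mem] with z hz; exact (hW01 _ hx _ hz).2)
    simpa using this

/-- the sandwich: a.e. `x`, `mu {y | f y ≤ f x} = ofReal (f x)` -/
lemma sandwich (hWmeas : Measurable (Function.uncurry W))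
    (hW01 : ∀ x ∈ Icc (0:ℝ) 1, ∀ y ∈ Icc (0:ℝ) 1, W x y ∈ Icc (0:ℝ) 1)
    (hf : ∀ x, f x = ∫ y, W x y ∂mu) (hfm : Measurable f)
    (hK : ∀ᵐ x ∂mu, ∀ᵐ y ∂mu,
      (f y < f x → W x y = 1 ∧ W y x = 0) ∧ (f x < f y → W x y = 0 ∧ W y x = 1))
    (hatom : ∀ s : ℝ, mu {x | f x = s} = 0) :
    ∀ᵐ x ∂mu, mu {y | f y ≤ f x} = ENNReal.ofReal (f x) := by
  filter_upwards [hK, mu_ae_mem] with x hKx hxI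
  have intx : Integrable (fun y => W x y) mu := by
    refine bdd_int (C := 1) (hWmeas.of_uncurry_left).aestronglyMeasurable ?_
    filter_upwards [mu_ae_mem] with z hz
    have := hW01 _ hxI _ hz
    rw [abs_le]; exact ⟨by linarith [this.1], this.2⟩
  have hle_meas : MeasurableSet {y | f y ≤ f x} := hfm measurableSet_Iic
  have hlt_meas : MeasurableSet {y | f y < f x} := hfm measurableSet_Iio
  -- upper bound
  have hup : f x ≤ (mu {y | f y ≤ f x}).toReal := by
    have hcmp : ∀ᵐ y ∂mu, W x y ≤ ({y | f y ≤ f x}).indicator (fun _ => (1:ℝ)) y := by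
      filter_upwards [hKx, mu_ae_mem] with y hy hyI
      by_cases h : f y ≤ f x
      · have e : ({y | f y ≤ f x}).indicator (fun _ => (1:ℝ)) y = 1 :=
          indicator_of_mem (show y ∈ {y | f y ≤ f x} from h) _
        rw [e]
        exact (hW01 _ hxI _ hyI).2
      · have e : ({y | f y ≤ f x}).indicator (fun _ => (1:ℝ)) y = 0 :=
          indicator_of_notMem (show y ∉ {y | f y ≤ f x} from h) _
        rw [e, (hy.2 (not_le.mp h)).1]
    have hind : Integrable (({y | f y ≤ f x}).indicator (fun _ => (1:ℝ))) mu :=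
      (integrable_const 1).indicator hle_meas
    have := integral_mono_ae intx hind hcmp
    rw [integral_indicator_const _ hle_meas] at this
    simpa [hf x, measureReal_def] using this
  -- lower bound
  have hlo : (mu {y | f y < f x}).toReal ≤ f x := by
    have hcmp : ∀ᵐ y ∂mu, ({y | f y < f x}).indicator (fun _ => (1:ℝ)) y ≤ W x y := by
      filter_upwards [hKx, mu_ae_mem] with y hy hyI
      by_cases h : f y < f x
      · have e : ({y | f y < f x}).indicator (fun _ => (1:ℝ)) y = 1 :=
          indicator_of_mem (show y ∈ {y | f y < f x} from h) _
        rw [e, (hy.1 h).1]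
      · have e : ({y | f y < f x}).indicator (fun _ => (1:ℝ)) y = 0 :=
          indicator_of_notMem (show y ∉ {y | f y < f x} from h) _
        rw [e]
        exact (hW01 _ hxI _ hyI).1
    have hind : Integrable (({y | f y < f x}).indicator (fun _ => (1:ℝ))) mu :=
      (integrable_const 1).indicator hlt_meas
    have := integral_mono_ae hind intx hcmp
    rw [integral_indicator_const _ hlt_meas] at this
    simpa [hf x, measureReal_def] using this
  -- the two measures agree since there are no atoms
  have hsub : {y | f y ≤ f x} ⊆ {y | f y < f x} ∪ {y | f y = f x} := by
    intro y hy
    have hy' : f y ≤ f x := hy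
    by_cases h : f y < f x
    · exact mem_union_left _ (show y ∈ {y | f y < f x} from h)
    · exact mem_union_right _ (show y ∈ {y | f y = f x} from le_antisymm hy' (not_lt.mp h))
  have heq : mu {y | f y ≤ f x} = mu {y | f y < f x} := by
    refine le_antisymm ?_ (measure_mono fun y hy => show f y ≤ f x from le_of_lt hy)
    calc mu {y | f y ≤ f x} ≤ mu ({y | f y < f x} ∪ {y | f y = f x}) := measure_mono hsub
    _ ≤ mu {y | f y < f x} + mu {y | f y = f x} := measure_union_le _ _
    _ = mu {y | f y < f x} := by rw [hatom (f x), add_zero]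
  have hfin : mu {y | f y ≤ f x} ≠ ⊤ := measure_ne_top _ _
  have : (mu {y | f y ≤ f x}).toReal = f x := by
    rw [heq] at hup ⊢
    linarith
  calc mu {y | f y ≤ f x} = ENNReal.ofReal ((mu {y | f y ≤ f x}).toReal) :=
        (ENNReal.ofReal_toReal hfin).symm
  _ = ENNReal.ofReal (f x) := by rw [this]

end pieces4

section pieces5
variable {f : ℝ → ℝ}

lemma cdf_eq (hfm : Measurable f)
    (hG : ∀ᵐ x ∂mu, mu {y | f y ≤ f x} = ENNReal.ofReal (f x))
    (hatom : ∀ s : ℝ, mu {x | f x = s} = 0)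
    (hf01 : ∀ᵐ x ∂mu, f x ∈ Icc (0:ℝ) 1) :
    ∀ t ∈ Icc (0:ℝ) 1, mu {y | f y ≤ t} = ENNReal.ofReal t := by
  set D : Set ℝ := {s | mu {y | f y ≤ s} = ENNReal.ofReal s} with hD
  have hDnull : mu {x | f x ∉ D} = 0 := by
    have h' : ∀ᵐ x ∂mu, f x ∈ D := hG
    rw [ae_iff] at h'
    exact h'
  have hIccnull : mu {x | f x ∉ Icc (0:ℝ) 1} = 0 := by
    rw [ae_iff] at hf01; exact hf01
  have hflt0 : mu {x | f x < 0} = 0 := by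
    refine measure_mono_null ?_ hIccnull
    intro x hx
    have hx' : f x < 0 := hx
    show f x ∉ Icc (0:ℝ) 1
    simp only [mem_Icc, not_and_or, not_le]
    exact Or.inl hx'
  have hfgt1 : mu {x | 1 < f x} = 0 := by
    refine measure_mono_null ?_ hIccnull
    intro x hx
    have hx' : 1 < f x := hx
    show f x ∉ Icc (0:ℝ) 1
    simp only [mem_Icc, not_and_or, not_le]
    exact Or.inr hx'
  have hD0 : (0:ℝ) ∈ D := by
    show mu {y | f y ≤ 0} = ENNReal.ofReal 0
    rw [ENNReal.ofReal_zero]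
    have hsub : {y | f y ≤ 0} ⊆ {y | f y < 0} ∪ {y | f y = 0} := by
      intro y hy
      have hy' : f y ≤ 0 := hy
      by_cases h : f y < 0
      · exact mem_union_left _ (show y ∈ {y | f y < 0} from h)
      · exact mem_union_right _ (show y ∈ {y | f y = 0} from le_antisymm hy' (not_lt.mp h))
    refine le_antisymm ?_ (by simp)
    calc mu {y | f y ≤ 0} ≤ mu ({y | f y < 0} ∪ {y | f y = 0}) := measure_mono hsub
    _ ≤ mu {y | f y < 0} + mu {y | f y = 0} := measure_union_le _ _
    _ = 0 := by rw [hflt0, hatom 0, add_zero]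
  have hD1 : (1:ℝ) ∈ D := by
    show mu {y | f y ≤ 1} = ENNReal.ofReal 1
    have h1 : (mu univ : ℝ≥0∞) = 1 := measure_univ
    have hsub : (univ : Set ℝ) ⊆ {y | f y ≤ 1} ∪ {y | 1 < f y} := by
      intro y _
      by_cases h : f y ≤ 1
      · exact mem_union_left _ (show y ∈ {y | f y ≤ 1} from h)
      · exact mem_union_right _ (show y ∈ {y | 1 < f y} from not_le.mp h)
    have hge : (1:ℝ≥0∞) ≤ mu {y | f y ≤ 1} := by
      calc (1:ℝ≥0∞) = mu univ := h1.symm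
      _ ≤ mu {y | f y ≤ 1} + mu {y | 1 < f y} :=
        le_trans (measure_mono hsub) (measure_union_le _ _)
      _ = mu {y | f y ≤ 1} := by rw [hfgt1, add_zero]
    have hle : mu {y | f y ≤ 1} ≤ 1 := by
      calc mu {y | f y ≤ 1} ≤ mu univ := measure_mono (subset_univ _)
      _ = 1 := h1
    rw [ENNReal.ofReal_one]
    exact le_antisymm hle hge
  intro t ht
  -- the sup from below
  set M : Set ℝ := D ∩ Icc 0 t with hM
  have hMne : M.Nonempty := ⟨0, hD0, le_refl 0, ht.1⟩
  have hMbdd : BddAbove M := ⟨t, fun s hs => hs.2.2⟩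
  set u : ℝ := sSup M with hu_def
  have hu_le : u ≤ t := csSup_le hMne fun s hs => hs.2.2
  have hu0 : 0 ≤ u := le_csSup hMbdd ⟨hD0, le_refl 0, ht.1⟩
  have hu : mu {y | f y ≤ u} = ENNReal.ofReal u := by
    by_cases hud : u ∈ D
    · exact hud
    obtain ⟨a, amono, atend, amem⟩ := exists_seq_tendsto_sSup hMne hMbdd
    have halt : ∀ n, a n < u := fun n =>
      lt_of_le_of_ne (le_csSup hMbdd (amem n)) fun h => hud (h ▸ (amem n).1)
    have hlow : ENNReal.ofReal u ≤ mu {y | f y ≤ u} := by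
      refine le_of_tendsto' (ENNReal.tendsto_ofReal atend) fun n => ?_
      rw [← (amem n).1]
      exact measure_mono fun y hy => le_trans hy (halt n).le
    have hUnion : {y | f y < u} = ⋃ n, {y | f y ≤ a n} := by
      ext y
      simp only [mem_setOf_eq, mem_iUnion]
      constructor
      · intro h
        obtain ⟨n, hn⟩ := (atend.eventually (eventually_gt_nhds h)).exists
        exact ⟨n, le_of_lt hn⟩
      · rintro ⟨n, hn⟩
        exact lt_of_le_of_lt hn (halt n)
    have hmono_sets : Monotone fun n => {y | f y ≤ a n} :=
      fun i j hij y hy => le_trans hy (amono hij)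
    have hup2 : mu {y | f y ≤ u} ≤ ENNReal.ofReal u := by
      have hsub : {y | f y ≤ u} ⊆ {y | f y < u} ∪ {y | f y = u} := by
        intro y hy
        have hy' : f y ≤ u := hy
        by_cases h : f y < u
        · exact mem_union_left _ (show y ∈ {y | f y < u} from h)
        · exact mem_union_right _ (show y ∈ {y | f y = u} from le_antisymm hy' (not_lt.mp h))
      calc mu {y | f y ≤ u} ≤ mu ({y | f y < u} ∪ {y | f y = u}) := measure_mono hsub
      _ ≤ mu {y | f y < u} + mu {y | f y = u} := measure_union_le _ _
      _ = mu {y | f y < u} := by rw [hatom u, add_zero]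
      _ = ⨆ n, mu {y | f y ≤ a n} := by
          rw [hUnion, hmono_sets.directed_le.measure_iUnion]
      _ = ⨆ n, ENNReal.ofReal (a n) := iSup_congr fun n => (amem n).1
      _ ≤ ENNReal.ofReal u := iSup_le fun n => ENNReal.ofReal_le_ofReal (halt n).le
    exact le_antisymm hup2 hlow
  have hbadu : mu {y | u < f y ∧ f y ≤ t} = 0 := by
    refine measure_mono_null ?_ hDnull
    intro y hy
    obtain ⟨h1, h2⟩ := (hy : u < f y ∧ f y ≤ t)
    show f y ∉ D
    intro hfD
    have : f y ∈ M := ⟨hfD, le_trans hu0 h1.le, h2⟩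
    exact absurd (le_csSup hMbdd this) (not_le.mpr h1)
  have hut : mu {y | f y ≤ t} = ENNReal.ofReal u := by
    refine le_antisymm ?_ ?_
    · have hsub : {y | f y ≤ t} ⊆ {y | f y ≤ u} ∪ {y | u < f y ∧ f y ≤ t} := by
        intro y hy
        have hy' : f y ≤ t := hy
        by_cases h : f y ≤ u
        · exact mem_union_left _ (show y ∈ {y | f y ≤ u} from h)
        · exact mem_union_right _ (show y ∈ {y | u < f y ∧ f y ≤ t} from ⟨not_le.mp h, hy'⟩)
      calc mu {y | f y ≤ t} ≤ mu ({y | f y ≤ u} ∪ {y | u < f y ∧ f y ≤ t}) := measure_mono hsub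
      _ ≤ mu {y | f y ≤ u} + mu {y | u < f y ∧ f y ≤ t} := measure_union_le _ _
      _ = ENNReal.ofReal u := by rw [hu, hbadu, add_zero]
    · rw [← hu]
      exact measure_mono fun y hy => le_trans hy hu_le
  -- the inf from above
  set N : Set ℝ := D ∩ Icc t 1 with hN
  have hNne : N.Nonempty := ⟨1, hD1, ht.2, le_refl 1⟩
  have hNbdd : BddBelow N := ⟨t, fun s hs => hs.2.1⟩
  set v : ℝ := sInf N with hv_def
  have hv_ge : t ≤ v := le_csInf hNne fun s hs => hs.2.1
  have hv1 : v ≤ 1 := csInf_le hNbdd ⟨hD1, ht.2, le_refl 1⟩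
  have hv : mu {y | f y ≤ v} = ENNReal.ofReal v := by
    by_cases hvd : v ∈ D
    · exact hvd
    obtain ⟨a, aanti, atend, amem⟩ := exists_seq_tendsto_sInf hNne hNbdd
    have hagt : ∀ n, v < a n := fun n =>
      lt_of_le_of_ne (csInf_le hNbdd (amem n)) fun h => hvd (h ▸ (amem n).1)
    have hInter : {y | f y ≤ v} = ⋂ n, {y | f y ≤ a n} := by
      ext y
      simp only [mem_setOf_eq, mem_iInter]
      constructor
      · intro h n
        exact le_trans h (hagt n).le
      · intro h
        by_contra hlt
        obtain ⟨n, hn⟩ := (atend.eventually (eventually_lt_nhds (not_le.mp hlt))).exists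
        exact absurd (h n) (not_le.mpr hn)
    have hanti_sets : Antitone fun n => {y | f y ≤ a n} :=
      fun i j hij y hy => le_trans hy (aanti hij)
    have htend := tendsto_measure_iInter_atTop (μ := mu) (s := fun n => {y | f y ≤ a n})
      (fun n => (hfm measurableSet_Iic).nullMeasurableSet) hanti_sets
      ⟨0, measure_ne_top mu _⟩
    have heq : (mu ∘ fun n => {y | f y ≤ a n}) = fun n => ENNReal.ofReal (a n) :=
      funext fun n => (amem n).1
    rw [heq] at htend
    rw [hInter]
    exact tendsto_nhds_unique htend (ENNReal.tendsto_ofReal atend)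
  have hbadv : mu {y | t < f y ∧ f y < v} = 0 := by
    refine measure_mono_null ?_ hDnull
    intro y hy
    obtain ⟨h1, h2⟩ := (hy : t < f y ∧ f y < v)
    show f y ∉ D
    intro hfD
    have : f y ∈ N := ⟨hfD, h1.le, le_trans h2.le hv1⟩
    exact absurd (csInf_le hNbdd this) (not_le.mpr h2)
  have hvt : mu {y | f y ≤ t} = ENNReal.ofReal v := by
    rw [← hv]
    refine le_antisymm (measure_mono fun y hy => le_trans hy hv_ge) ?_
    have hsub : {y | f y ≤ v}
        ⊆ ({y | f y ≤ t} ∪ {y | t < f y ∧ f y < v}) ∪ {y | f y = v} := by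
      intro y hy
      have hy' : f y ≤ v := hy
      by_cases h1 : f y ≤ t
      · exact mem_union_left _ (mem_union_left _ (show y ∈ {y | f y ≤ t} from h1))
      · by_cases h2 : f y < v
        · exact mem_union_left _ (mem_union_right _
            (show y ∈ {y | t < f y ∧ f y < v} from ⟨not_le.mp h1, h2⟩))
        · exact mem_union_right _
            (show y ∈ {y | f y = v} from le_antisymm hy' (not_lt.mp h2))
    calc mu {y | f y ≤ v}
        ≤ mu (({y | f y ≤ t} ∪ {y | t < f y ∧ f y < v}) ∪ {y | f y = v}) := measure_mono hsub
    _ ≤ mu ({y | f y ≤ t} ∪ {y | t < f y ∧ f y < v}) + mu {y | f y = v} := measure_union_le _ _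
    _ ≤ mu {y | f y ≤ t} + mu {y | t < f y ∧ f y < v} + mu {y | f y = v} :=
        add_le_add (measure_union_le _ _) le_rfl
    _ = mu {y | f y ≤ t} := by rw [hbadv, hatom v, add_zero, add_zero]
  have huv : u = v := by
    have := hut.symm.trans hvt
    rwa [ENNReal.ofReal_eq_ofReal_iff hu0 (le_trans ht.1 hv_ge)] at this
  have : t = u := le_antisymm (huv ▸ hv_ge) hu_le
  rw [hut, ← this]

end pieces5

theorem stmt_14
    (W : ℝ → ℝ → ℝ) (hWmeas : Measurable (Function.uncurry W))
    (hW01 : ∀ x ∈ Icc (0:ℝ) 1, ∀ y ∈ Icc (0:ℝ) 1, W x y ∈ Icc (0:ℝ) 1)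
    (hWsum : ∀ᵐ p ∂(mu.prod mu), W p.1 p.2 + W p.2 p.1 = 1)
    (hC3 : ∫ x, ∫ y, ∫ z, W x y * W y z * W z x ∂mu ∂mu ∂mu = 0)
    (f : ℝ → ℝ) (hf : ∀ x, f x = ∫ y, W x y ∂mu) :
    Measure.map f mu = mu ∧ ∀ k : ℕ, ∫ x, f x ^ k ∂mu = 1 / (k + 1) := by
  have hfm : Measurable f := f_meas hWmeas hf
  have h0 := cyc_zero hWmeas hW01 hC3
  have h0' := cyc_zero_swap hWmeas h0
  have hK := score_compare hWmeas hW01 hWsum hf h0 h0'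
  have h6 := six_sum hWmeas hW01 hWsum hC3
  have hatom : ∀ s : ℝ, mu {x | f x = s} = 0 :=
    no_atom hWmeas hW01 hWsum hf hfm hK h6
  have hG := sandwich hWmeas hW01 hf hfm hK hatom
  have hf01ae : ∀ᵐ x ∂mu, f x ∈ Icc (0:ℝ) 1 := by
    filter_upwards [mu_ae_mem] with x hx
    exact f_bdd hWmeas hW01 hf x hx
  have hcdf := cdf_eq hfm hG hatom hf01ae
  have hIccnull : mu {x | f x ∉ Icc (0:ℝ) 1} = 0 := by
    rw [ae_iff] at hf01ae; exact hf01ae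
  have hmap : Measure.map f mu = mu := by
    haveI : IsProbabilityMeasure (Measure.map f mu) :=
      Measure.isProbabilityMeasure_map hfm.aemeasurable
    refine Measure.ext_of_Iic (Measure.map f mu) mu fun a => ?_
    rw [Measure.map_apply hfm measurableSet_Iic]
    have hpre : f ⁻¹' Iic a = {y | f y ≤ a} := rfl
    have hrhs : mu (Iic a) = volume (Iic a ∩ Icc (0:ℝ) 1) :=
      Measure.restrict_apply measurableSet_Iic
    rw [hpre, hrhs]
    rcases lt_or_ge a 0 with ha | ha
    · have h1 : Iic a ∩ Icc (0:ℝ) 1 = ∅ := by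
        ext x
        simp only [mem_inter_iff, mem_Iic, mem_Icc, mem_empty_iff_false, iff_false, not_and]
        intro hx h0x h1x
        linarith
      have h2 : mu {y | f y ≤ a} = 0 := by
        refine measure_mono_null ?_ hIccnull
        intro y hy
        have : f y ≤ a := hy
        show f y ∉ Icc (0:ℝ) 1
        simp only [mem_Icc, not_and_or, not_le]
        exact Or.inl (lt_of_le_of_lt this ha)
      rw [h1, h2, measure_empty]
    · rcases le_or_gt a 1 with ha1 | ha1
      · have h1 : Iic a ∩ Icc (0:ℝ) 1 = Icc 0 a := by
          ext x
          simp only [mem_inter_iff, mem_Iic, mem_Icc]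
          constructor
          · rintro ⟨h1, h2, h3⟩; exact ⟨h2, h1⟩
          · rintro ⟨h1, h2⟩; exact ⟨h2, h1, le_trans h2 ha1⟩
        rw [h1, Real.volume_Icc, hcdf a ⟨ha, ha1⟩, sub_zero]
      · have h1 : Iic a ∩ Icc (0:ℝ) 1 = Icc 0 1 := by
          ext x
          simp only [mem_inter_iff, mem_Iic, mem_Icc]
          constructor
          · rintro ⟨h1, h2, h3⟩; exact ⟨h2, h3⟩
          · rintro ⟨h1, h2⟩; exact ⟨le_trans h2 ha1.le, h1, h2⟩
        have h2 : mu {y | f y ≤ a} = 1 := by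
          refine le_antisymm (le_trans (measure_mono (subset_univ _)) (by simp)) ?_
          have := hcdf 1 ⟨zero_le_one, le_refl 1⟩
          calc (1:ℝ≥0∞) = ENNReal.ofReal 1 := by simp
          _ = mu {y | f y ≤ 1} := this.symm
          _ ≤ mu {y | f y ≤ a} := measure_mono fun y hy => le_trans hy ha1.le
        rw [h1, h2, Real.volume_Icc]
        simp
  refine ⟨hmap, fun k => ?_⟩
  have hint : ∫ x, f x ^ k ∂mu = ∫ s, s ^ k ∂(Measure.map f mu) := by
    rw [integral_map hfm.aemeasurable]
    exact (measurable_id.pow_const k).aestronglyMeasurable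
  rw [hint, hmap]
  have : ∫ s, s ^ k ∂mu = ∫ s in Icc (0:ℝ) 1, s ^ k := rfl
  rw [this, integral_Icc_eq_integral_Ioc, ← intervalIntegral.integral_of_le zero_le_one,
    integral_pow]
  push_cast
  norm_num
end

section
/- Let f : [0,1] → [0,1] be a non-decreasing measurable function, and suppose that for every non-negative integer n, ∫₀¹ f(x)ⁿ dx = ∫₀¹ (1−f(x))ⁿ dx. Then f(x) + f(1−x) = 1 for almost every x ∈ [0,1]. -/
set_option maxHeartbeats 1000000
open MeasureTheory Set Filter
open scoped symmDiff Topology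

lemma aux_refl_int (F : ℝ → ℝ) : ∫ x in Icc (0:ℝ) 1, F (1 - x) = ∫ x in Icc (0:ℝ) 1, F x := by
  rw [MeasureTheory.integral_Icc_eq_integral_Ioc, MeasureTheory.integral_Icc_eq_integral_Ioc,
    ← intervalIntegral.integral_of_le (by norm_num : (0:ℝ) ≤ 1),
    ← intervalIntegral.integral_of_le (by norm_num : (0:ℝ) ≤ 1),
    intervalIntegral.integral_comp_sub_left F 1]
  norm_num

lemma aux_upclosed (A : Set ℝ) (hA : A ⊆ Icc (0:ℝ) 1)
    (hup : ∀ x ∈ A, ∀ y ∈ Icc (0:ℝ) 1, x ≤ y → y ∈ A) :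
    volume (A ∆ Ioc (1 - (volume A).toReal) 1) = 0 := by
  rcases A.eq_empty_or_nonempty with hAe | hAne
  · simp [hAe]
  · set a := sInf A with ha
    have hbdd : BddBelow A := ⟨0, fun x hx => (hA hx).1⟩
    have ha0 : 0 ≤ a := le_csInf hAne fun x hx => (hA hx).1
    have ha1 : a ≤ 1 := by
      obtain ⟨x, hx⟩ := hAne
      exact (csInf_le hbdd hx).trans (hA hx).2
    have hsub1 : Ioc a 1 ⊆ A := by
      intro y hy
      obtain ⟨x, hxA, hxy⟩ := exists_lt_of_csInf_lt hAne hy.1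
      exact hup x hxA y ⟨(hA hxA).1.trans hxy.le, hy.2⟩ hxy.le
    have hsub2 : A ⊆ Icc a 1 := fun x hx => ⟨csInf_le hbdd hx, (hA hx).2⟩
    have hvol : volume A = ENNReal.ofReal (1 - a) := by
      apply le_antisymm
      · exact (measure_mono hsub2).trans_eq (by rw [Real.volume_Icc])
      · exact le_trans (le_of_eq (Real.volume_Ioc).symm) (measure_mono hsub1)
    have htr : 1 - (volume A).toReal = a := by
      rw [hvol, ENNReal.toReal_ofReal (by linarith)]; ring
    rw [htr]
    have hdiff : A ∆ Ioc a 1 ⊆ {a} := by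
      intro x hx
      rw [Set.mem_symmDiff] at hx
      rcases hx with ⟨hxA, hxn⟩ | ⟨hxJ, hxn⟩
      · have h2 := hsub2 hxA
        simp only [mem_Ioc, not_and, not_lt, mem_singleton_iff] at hxn ⊢
        rcases lt_or_ge a x with h | h
        · exact (hxn h h2.2).elim
        · exact le_antisymm h h2.1
      · exact absurd (hsub1 hxJ) hxn
    exact measure_mono_null hdiff Real.volume_singleton

theorem stmt_18
    (f : ℝ → ℝ) (hfmeas : Measurable f)
    (hf01 : ∀ x ∈ Icc (0:ℝ) 1, f x ∈ Icc (0:ℝ) 1)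
    (hmono : MonotoneOn f (Icc (0:ℝ) 1))
    (hmom : ∀ n : ℕ, ∫ x in Icc (0:ℝ) 1, f x ^ n = ∫ x in Icc (0:ℝ) 1, (1 - f x) ^ n) :
    ∀ᵐ x ∂(volume.restrict (Icc (0:ℝ) 1)), f x + f (1 - x) = 1 := by
  set μ : Measure ℝ := volume.restrict (Icc (0:ℝ) 1) with hμ
  haveI : IsFiniteMeasure μ := by rw [hμ]; infer_instance
  set g : ℝ → ℝ := fun x => 1 - f (1 - x) with hg
  have hgmeas : Measurable g := by
    rw [hg]
    exact measurable_const.sub (hfmeas.comp (measurable_const.sub measurable_id))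
  have haeI : ∀ᵐ x ∂μ, x ∈ Icc (0:ℝ) 1 := by
    rw [hμ]; exact ae_restrict_mem measurableSet_Icc
  have hμuniv : (μ Set.univ).toReal = 1 := by
    rw [hμ]; simp [Real.volume_Icc]
  have hg01 : ∀ x ∈ Icc (0:ℝ) 1, g x ∈ Icc (0:ℝ) 1 := by
    intro x hx
    have h1x : (1:ℝ) - x ∈ Icc (0:ℝ) 1 := ⟨by linarith [hx.2], by linarith [hx.1]⟩
    have h := hf01 _ h1x
    rw [hg]
    exact ⟨by simpa using h.2, by simpa using h.1⟩
  have hrefl : ∀ F : ℝ → ℝ, ∫ x, F (1 - x) ∂μ = ∫ x, F x ∂μ := by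
    intro F; rw [hμ]; exact aux_refl_int F
  -- moments of g equal moments of f
  have hmomg : ∀ n : ℕ, ∫ x, (f x) ^ n ∂μ = ∫ x, (g x) ^ n ∂μ := by
    intro n
    simp only [hg]
    exact (hmom n).trans ((hrefl fun y => (1 - f y) ^ n).symm)
  -- integrability of bounded measurable compositions
  have hint : ∀ (h : ℝ → ℝ) (C : ℝ), Measurable h → (∀ y ∈ Icc (0:ℝ) 1, |h y| ≤ C) →
      (∀ (k : ℝ → ℝ), Measurable k → (∀ x ∈ Icc (0:ℝ) 1, k x ∈ Icc (0:ℝ) 1) →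
        Integrable (fun x => h (k x)) μ) := by
    intro h C hhm hC k hkm hk01
    refine Integrable.mono' (integrable_const C) ((hhm.comp hkm).aestronglyMeasurable) ?_
    filter_upwards [haeI] with x hx
    exact hC _ (hk01 x hx)
  have hpowbd : ∀ i : ℕ, ∀ y ∈ Icc (0:ℝ) 1, |y ^ i| ≤ 1 := by
    intro i y hy
    rw [abs_pow]
    exact pow_le_one₀ (abs_nonneg y) (abs_le.mpr ⟨by linarith [hy.1], hy.2⟩)
  -- polynomial integrals agree
  have hpoly : ∀ p : Polynomial ℝ, ∫ x, p.eval (f x) ∂μ = ∫ x, p.eval (g x) ∂μ := by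
    intro p
    have hev : ∀ y : ℝ, p.eval y =
        ∑ i ∈ Finset.range (p.natDegree + 1), p.coeff i * y ^ i := by
      intro y
      rw [Polynomial.eval_eq_sum_range]
    simp only [hev]
    rw [integral_finset_sum, integral_finset_sum]
    · exact Finset.sum_congr rfl fun i _ => by
        rw [integral_const_mul, integral_const_mul, hmomg i]
    · exact fun i _ => (hint (fun y => y ^ i) 1 (measurable_id.pow_const i) (hpowbd i)
        g hgmeas hg01).const_mul _
    · exact fun i _ => (hint (fun y => y ^ i) 1 (measurable_id.pow_const i) (hpowbd i)
        f hfmeas hf01).const_mul _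
  -- continuous integrals agree
  have hcont : ∀ φ : ℝ → ℝ, Continuous φ → ∫ x, φ (f x) ∂μ = ∫ x, φ (g x) ∂μ := by
    intro φ hφ
    obtain ⟨Cφ, hCφ⟩ := isCompact_Icc.exists_bound_of_continuousOn
      (hφ.continuousOn (s := Icc (0:ℝ) 1))
    have key : ∀ ε : ℝ, 0 < ε → |(∫ x, φ (f x) ∂μ) - ∫ x, φ (g x) ∂μ| ≤ 2 * ε := by
      intro ε hε
      obtain ⟨p, hp⟩ := exists_polynomial_near_of_continuousOn 0 1 φ hφ.continuousOn ε hε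
      obtain ⟨Cp, hCp⟩ := isCompact_Icc.exists_bound_of_continuousOn
        ((Polynomial.continuous p).continuousOn (s := Icc (0:ℝ) 1))
      have hd : ∀ k : ℝ → ℝ, Measurable k → (∀ x ∈ Icc (0:ℝ) 1, k x ∈ Icc (0:ℝ) 1) →
          |(∫ x, φ (k x) ∂μ) - ∫ x, p.eval (k x) ∂μ| ≤ ε := by
        intro k hkm hk01
        have h1 : Integrable (fun x => φ (k x)) μ := by
          refine hint φ Cφ hφ.measurable ?_ k hkm hk01
          intro y hy; rw [← Real.norm_eq_abs]; exact hCφ y hy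
        have h2 : Integrable (fun x => p.eval (k x)) μ := by
          refine hint _ Cp (Polynomial.continuous p).measurable ?_ k hkm hk01
          intro y hy; rw [← Real.norm_eq_abs]; exact hCp y hy
        rw [← integral_sub h1 h2, ← Real.norm_eq_abs]
        calc ‖∫ x, (φ (k x) - p.eval (k x)) ∂μ‖ ≤ ε * (μ Set.univ).toReal := by
              apply norm_integral_le_of_norm_le_const
              filter_upwards [haeI] with x hx
              rw [Real.norm_eq_abs, abs_sub_comm]
              exact (hp _ (hk01 x hx)).le
          _ = ε := by rw [hμuniv, mul_one]
      have hsplit : (∫ x, φ (f x) ∂μ) - ∫ x, φ (g x) ∂μ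
          = ((∫ x, φ (f x) ∂μ) - ∫ x, p.eval (f x) ∂μ)
          + ((∫ x, p.eval (g x) ∂μ) - ∫ x, φ (g x) ∂μ) := by
        rw [hpoly p]; ring
      rw [hsplit]
      calc |((∫ x, φ (f x) ∂μ) - ∫ x, p.eval (f x) ∂μ)
            + ((∫ x, p.eval (g x) ∂μ) - ∫ x, φ (g x) ∂μ)|
          ≤ |(∫ x, φ (f x) ∂μ) - ∫ x, p.eval (f x) ∂μ|
            + |(∫ x, p.eval (g x) ∂μ) - ∫ x, φ (g x) ∂μ| := abs_add_le _ _
        _ ≤ ε + ε := add_le_add (hd f hfmeas hf01)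
            (by rw [abs_sub_comm]; exact hd g hgmeas hg01)
        _ = 2 * ε := by ring
    by_contra hne
    have habs : 0 < |(∫ x, φ (f x) ∂μ) - ∫ x, φ (g x) ∂μ| :=
      abs_pos.mpr (sub_ne_zero.mpr hne)
    have := key (|(∫ x, φ (f x) ∂μ) - ∫ x, φ (g x) ∂μ| / 4) (by positivity)
    linarith
  -- superlevel measures agree
  have hlevel : ∀ t : ℝ, μ {x | t < f x} = μ {x | t < g x} := by
    intro t
    set φ : ℕ → ℝ → ℝ := fun k y => min 1 (max 0 ((k + 1 : ℝ) * (y - t))) with hφdef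
    have hφcont : ∀ k, Continuous (φ k) := by
      intro k; rw [hφdef]; fun_prop
    have hφbd : ∀ k y, ‖φ k y‖ ≤ 1 := by
      intro k y
      rw [hφdef, Real.norm_eq_abs, abs_le]
      exact ⟨le_trans (by norm_num) (le_min zero_le_one (le_max_left _ _)), min_le_left _ _⟩
    have hφlim : ∀ h : ℝ → ℝ, Measurable h →
        Tendsto (fun k => ∫ x, φ k (h x) ∂μ) atTop (𝓝 ((μ {x | t < h x}).toReal)) := by
      intro h hm
      have hms : MeasurableSet {x | t < h x} := measurableSet_lt measurable_const hm
      have heq : (μ {x | t < h x}).toReal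
          = ∫ x, Set.indicator {x | t < h x} (fun _ => (1:ℝ)) x ∂μ := by
        rw [integral_indicator_const _ hms]; simp; rfl
      rw [heq]
      apply tendsto_integral_of_dominated_convergence (fun _ => (1:ℝ))
      · exact fun k => ((hφcont k).measurable.comp hm).aestronglyMeasurable
      · exact integrable_const 1
      · exact fun k => Eventually.of_forall fun x => hφbd k _
      · apply Eventually.of_forall
        intro x
        by_cases hx : t < h x
        · have hev : ∀ᶠ k : ℕ in atTop, φ k (h x) = 1 := by
            have hpos : 0 < h x - t := sub_pos.mpr hx
            obtain ⟨N, hN⟩ := exists_nat_ge (1 / (h x - t))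
            filter_upwards [eventually_ge_atTop N] with k hk
            have hkN : (1:ℝ) / (h x - t) ≤ (k:ℝ) + 1 := by
              have : (N:ℝ) ≤ (k:ℝ) := Nat.cast_le.mpr hk
              linarith
            have hz : (1:ℝ) ≤ ((k:ℝ) + 1) * (h x - t) := (div_le_iff₀ hpos).mp hkN
            rw [hφdef]
            simp only
            rw [max_eq_right (le_trans zero_le_one hz), min_eq_left hz]
          rw [Set.indicator_of_mem (show x ∈ {x | t < h x} from hx)]
          exact Tendsto.congr' (hev.mono fun k hk => hk.symm) tendsto_const_nhds
        · rw [Set.indicator_of_notMem (show x ∉ {x | t < h x} from hx)]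
          have hz : ∀ k : ℕ, φ k (h x) = 0 := by
            intro k
            have hnp : ((k:ℝ) + 1) * (h x - t) ≤ 0 :=
              mul_nonpos_of_nonneg_of_nonpos (by positivity) (by push_neg at hx; linarith)
            rw [hφdef]
            simp only
            rw [max_eq_left hnp, min_eq_right zero_le_one]
          simp only [hz]
          exact tendsto_const_nhds
    have hlim1 := hφlim f hfmeas
    have hlim2 := hφlim g hgmeas
    have hseq : (fun k => ∫ x, φ k (f x) ∂μ) = fun k => ∫ x, φ k (g x) ∂μ := by
      funext k; exact hcont (φ k) (hφcont k)
    rw [hseq] at hlim1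
    have htR := tendsto_nhds_unique hlim1 hlim2
    exact (ENNReal.toReal_eq_toReal_iff' (measure_ne_top μ _) (measure_ne_top μ _)).mp htR
  -- g monotone
  have hgmono : ∀ x ∈ Icc (0:ℝ) 1, ∀ y ∈ Icc (0:ℝ) 1, x ≤ y → g x ≤ g y := by
    intro x hx y hy hxy
    have h1y : (1:ℝ) - y ∈ Icc (0:ℝ) 1 := ⟨by linarith [hy.2], by linarith [hy.1]⟩
    have h1x : (1:ℝ) - x ∈ Icc (0:ℝ) 1 := ⟨by linarith [hx.2], by linarith [hx.1]⟩
    have hle := hmono h1y h1x (by linarith)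
    rw [hg]
    simp only
    linarith
  -- for each t, superlevel sets agree a.e.
  have hiff : ∀ t : ℝ, ∀ᵐ x ∂μ, (t < f x ↔ t < g x) := by
    intro t
    set Af := {x | x ∈ Icc (0:ℝ) 1 ∧ t < f x} with hAfd
    set Ag := {x | x ∈ Icc (0:ℝ) 1 ∧ t < g x} with hAgd
    have hupf : ∀ x ∈ Af, ∀ y ∈ Icc (0:ℝ) 1, x ≤ y → y ∈ Af :=
      fun x hx y hy hxy => ⟨hy, lt_of_lt_of_le hx.2 (hmono hx.1 hy hxy)⟩
    have hupg : ∀ x ∈ Ag, ∀ y ∈ Icc (0:ℝ) 1, x ≤ y → y ∈ Ag :=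
      fun x hx y hy hxy => ⟨hy, lt_of_lt_of_le hx.2 (hgmono x hx.1 y hy hxy)⟩
    have h1 := aux_upclosed Af (fun x hx => hx.1) hupf
    have h2 := aux_upclosed Ag (fun x hx => hx.1) hupg
    have hvolAf : volume Af = μ {x | t < f x} := by
      rw [hμ, Measure.restrict_apply (measurableSet_lt measurable_const hfmeas)]
      congr 1
      ext x
      simp only [hAfd, mem_setOf_eq, mem_inter_iff]
      tauto
    have hvolAg : volume Ag = μ {x | t < g x} := by
      rw [hμ, Measure.restrict_apply (measurableSet_lt measurable_const hgmeas)]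
      congr 1
      ext x
      simp only [hAgd, mem_setOf_eq, mem_inter_iff]
      tauto
    have hvoleq : volume Af = volume Ag := by rw [hvolAf, hvolAg, hlevel t]
    rw [hvoleq] at h1
    have hnull : volume (Af ∆ Ag) = 0 := by
      have hle := measure_symmDiff_le (μ := volume) Af (Ioc (1 - (volume Ag).toReal) 1) Ag
      rw [h1, symmDiff_comm (Ioc (1 - (volume Ag).toReal) 1) Ag, h2] at hle
      simpa using hle
    rw [ae_iff, hμ, Measure.restrict_apply' measurableSet_Icc]
    apply measure_mono_null _ hnull
    intro x hx
    rcases hx with ⟨hxn, hxI⟩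
    simp only [mem_setOf_eq] at hxn
    rw [Set.mem_symmDiff]
    by_cases hf : t < f x
    · exact Or.inl ⟨⟨hxI, hf⟩, fun hc => hxn ⟨fun _ => hc.2, fun _ => hf⟩⟩
    · refine Or.inr ⟨⟨hxI, ?_⟩, fun hc => hf hc.2⟩
      by_contra hgc
      exact hxn ⟨fun h => absurd h hf, fun h => absurd h hgc⟩
  -- conclude
  have hae : ∀ᵐ x ∂μ, ∀ q : ℚ, ((q:ℝ) < f x ↔ (q:ℝ) < g x) :=
    ae_all_iff.mpr fun q => hiff (q:ℝ)
  filter_upwards [hae] with x hx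
  have hfg : f x = g x := by
    by_contra hne
    rcases lt_or_gt_of_ne hne with hlt | hlt
    · obtain ⟨q, hq1, hq2⟩ := exists_rat_btwn hlt
      exact absurd ((hx q).mpr hq2) (not_lt.mpr hq1.le)
    · obtain ⟨q, hq1, hq2⟩ := exists_rat_btwn hlt
      exact absurd ((hx q).mp hq2) (not_lt.mpr hq1.le)
  rw [hg] at hfg
  simp only at hfg
  linarith
end
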